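/- arXiv:0911.2683 — 4 statements merged into one kernel-verified Lean document; each statement's English description precedes it below -/
import Mathlib

section
/- Let B be a finite set of permutations. If there exists an integer k such that every permutation in Av(B) has at most k active sites, then Av(B) contains only finitely many vertical alternations. -/
/-- A list of naturals is a permutation (in one-line notation) of `1,…,n`
where `n` is its length. -/
def IsPermList (l : List ℕ) : Prop :=
  l.Perm ((List.range l.length).map (· + 1))

/-- `f` is an occurrence of the pattern `β` in `π`: a strictly increasing
choice of indices of `π` whose entries are order isomorphic to `β`. -/
def IsOccurrence (π β : List ℕ) (f : Fin β.length → Fin π.length) : Prop :=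
  StrictMono f ∧ ∀ s t : Fin β.length, π.get (f s) < π.get (f t) ↔ β.get s < β.get t

/-- `π` contains the pattern `β`. -/
def PContains (π β : List ℕ) : Prop :=
  ∃ f : Fin β.length → Fin π.length, IsOccurrence π β f

/-- `π` avoids the pattern `β`. -/
def PAvoids (π β : List ℕ) : Prop :=
  ¬ PContains π β

/-- The class of permutations avoiding every member of `B`. -/
def Av (B : Set (List ℕ)) : Set (List ℕ) :=
  {π | IsPermList π ∧ ∀ β ∈ B, PAvoids π β}

/-- Insert a new maximum entry at (0-indexed) position `i` of `l`. -/
def insertMax (l : List ℕ) (i : ℕ) : List ℕ :=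
  l.insertIdx i (l.length + 1)

/-- Position `i` is an active site of `l` relative to `B`. -/
def ActiveSite (B : Set (List ℕ)) (l : List ℕ) (i : ℕ) : Prop :=
  i ≤ l.length ∧ insertMax l i ∈ Av B

/-- The increasing permutation `1,2,…,n`. -/
def incrPerm (n : ℕ) : List ℕ :=
  (List.range n).map (· + 1)

/-- A permutation (as a list) is a vertical alternation: every entry in an even
(1-indexed) position lies above every entry in an odd position, or vice versa.
(Index `s : Fin l.length` corresponds to 1-indexed position `s + 1`.) -/
def VerticalAlternation (l : List ℕ) : Prop :=
  (∀ s t : Fin l.length, s.val % 2 = 1 → t.val % 2 = 0 → l.get t < l.get s) ∨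
  (∀ s t : Fin l.length, s.val % 2 = 1 → t.val % 2 = 0 → l.get s < l.get t)

/-- The subsequence of entries in positions congruent to `r` (0-indexed, mod 2)
is increasing. -/
def IncOnRes (l : List ℕ) (r : ℕ) : Prop :=
  ∀ s t : Fin l.length, s < t → s.val % 2 = r → t.val % 2 = r → l.get s < l.get t

/-- The subsequence of entries in positions congruent to `r` (0-indexed, mod 2)
is decreasing. -/
def DecOnRes (l : List ℕ) (r : ℕ) : Prop :=
  ∀ s t : Fin l.length, s < t → s.val % 2 = r → t.val % 2 = r → l.get t < l.get s

/-- A vertical parallel alternation: a vertical alternation of even length whose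
odd-position and even-position subsequences are both increasing or both decreasing. -/
def IsVertParallel (l : List ℕ) : Prop :=
  VerticalAlternation l ∧ Even l.length ∧
    ((IncOnRes l 0 ∧ IncOnRes l 1) ∨ (DecOnRes l 0 ∧ DecOnRes l 1))

/-- A vertical wedge alternation: a vertical alternation of even length for which one of
the odd-position and even-position subsequences is increasing and the other decreasing. -/
def IsVertWedge (l : List ℕ) : Prop :=
  VerticalAlternation l ∧ Even l.length ∧
    ((IncOnRes l 0 ∧ DecOnRes l 1) ∨ (DecOnRes l 0 ∧ IncOnRes l 1))

/-- The vertical parallel alternation `σ_m`, with `σ_m(2i−1) = m+1−i` and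
`σ_m(2i) = 2m+1−i` (1-indexed). -/
def sigmaAlt (m : ℕ) : List ℕ :=
  (List.range (2 * m)).map (fun j => if j % 2 = 0 then m - j / 2 else 2 * m - j / 2)

/-- The vertical wedge alternation `τ_m`, with `τ_m(2i−1) = m+i` and
`τ_m(2i) = m+1−i` (1-indexed). -/
def tauAlt (m : ℕ) : List ℕ :=
  (List.range (2 * m)).map (fun j => if j % 2 = 0 then m + j / 2 + 1 else m - j / 2)

/-- Standardization: replace each entry of `l` by its rank among the entries of `l`. -/
def stList (l : List ℕ) : List ℕ :=
  l.map (fun x => (l.filter (fun y => y ≤ x)).length)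

namespace Stmt1Aux

def rnk (l : List ℕ) (x : ℕ) : ℕ := (l.filter (fun y => y ≤ x)).length

lemma stList_eq (l : List ℕ) : stList l = l.map (rnk l) := rfl

lemma length_stList (l : List ℕ) : (stList l).length = l.length := List.length_map _

lemma map_insertIdx' (f : ℕ → ℕ) (l : List ℕ) (i : ℕ) (a : ℕ) :
    (l.insertIdx i a).map f = (l.map f).insertIdx i (f a) := by
  induction l generalizing i with
  | nil => cases i <;> simp
  | cons b t ih =>
    cases i with
    | zero => simp
    | succ j => simp [List.insertIdx_succ_cons, ih]

lemma perm_insertIdx' (l : List ℕ) (a : ℕ) (i : ℕ) (h : i ≤ l.length) :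
    List.Perm (l.insertIdx i a) (a :: l) := by
  induction l generalizing i with
  | nil =>
    obtain rfl : i = 0 := by simpa using h
    simp
  | cons b t ih =>
    cases i with
    | zero => simp
    | succ j =>
      simp only [List.insertIdx_succ_cons]
      exact ((ih j (by simpa using h)).cons b).trans (List.Perm.swap a b t)

lemma rnk_le (l : List ℕ) (x : ℕ) : rnk l x ≤ l.length := List.length_filter_le _ _

lemma rnk_pos (l : List ℕ) {x : ℕ} (h : x ∈ l) : 1 ≤ rnk l x := by
  have hm : x ∈ l.filter (fun y => y ≤ x) := List.mem_filter.2 ⟨h, by simp⟩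
  have h2 := List.length_pos_iff.2 (List.ne_nil_of_mem hm)
  unfold rnk; omega

lemma rnk_mono (l : List ℕ) {a b : ℕ} (h : a ≤ b) : rnk l a ≤ rnk l b :=
  (List.monotone_filter_right l (fun x hx => by simp at hx ⊢; omega)).length_le

lemma rnk_strict (l : List ℕ) {a b : ℕ} (hab : a < b) (hb : b ∈ l) :
    rnk l a < rnk l b := by
  have hsub : List.Sublist (l.filter (fun y => y ≤ a)) (l.filter (fun y => y ≤ b)) :=
    List.monotone_filter_right l (fun x hx => by simp at hx ⊢; omega)
  refine Nat.lt_of_le_of_ne hsub.length_le (fun he => ?_)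
  have heq := hsub.eq_of_length he
  have hbmem : b ∈ l.filter (fun y => y ≤ b) := List.mem_filter.2 ⟨hb, by simp⟩
  rw [← heq] at hbmem
  have := (List.mem_filter.1 hbmem).2
  simp at this; omega

lemma rnk_lt_iff (l : List ℕ) {a b : ℕ} (hb : b ∈ l) :
    rnk l a < rnk l b ↔ a < b := by
  constructor
  · intro h; by_contra hc; push_neg at hc
    exact absurd (rnk_mono l hc) (by omega)
  · exact fun h => rnk_strict l h hb

lemma isPermList_nodup {l : List ℕ} (h : IsPermList l) : l.Nodup :=
  h.nodup_iff.2 (List.Nodup.map (add_left_injective 1) List.nodup_range)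

lemma isPermList_mem_le {l : List ℕ} (h : IsPermList l) {x : ℕ} (hx : x ∈ l) :
    1 ≤ x ∧ x ≤ l.length := by
  have hm := h.mem_iff.1 hx
  simp only [List.mem_map, List.mem_range] at hm
  obtain ⟨j, hj, rfl⟩ := hm; omega

lemma isPermList_stList {l : List ℕ} (h : l.Nodup) : IsPermList (stList l) := by
  have hnd : (stList l).Nodup := by
    rw [stList_eq]
    refine List.Nodup.map_on ?_ h
    intro x hx y hy hxy
    rcases Nat.lt_trichotomy x y with h1 | h1 | h1
    · exact absurd hxy (Nat.ne_of_lt (rnk_strict l h1 hy))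
    · exact h1
    · exact absurd hxy.symm (Nat.ne_of_lt (rnk_strict l h1 hx))
  have hsub : stList l ⊆ (List.range l.length).map (· + 1) := by
    intro x hx
    rw [stList_eq, List.mem_map] at hx
    obtain ⟨y, hy, rfl⟩ := hx
    have h1 := rnk_pos l hy
    have h2 := rnk_le l y
    simp only [List.mem_map, List.mem_range]
    exact ⟨rnk l y - 1, by omega, by omega⟩
  have hp := (hnd.subperm hsub).perm_of_length_le (by simp [length_stList])
  unfold IsPermList
  rw [length_stList]
  exact hp

lemma stList_avoids {π l' β : List ℕ} (hsub : List.Sublist l' π) (hav : PAvoids π β) :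
    PAvoids (stList l') β := by
  rintro ⟨f, hf1, hf2⟩
  obtain ⟨g, hg⟩ := List.sublist_iff_exists_fin_orderEmbedding_get_eq.1 hsub
  refine hav ⟨fun s => g ((f s).cast (length_stList l')), ?_, ?_⟩
  · intro s t hst
    exact g.strictMono (by simp only [Fin.lt_def, Fin.coe_cast]; exact hf1 hst)
  · intro s t
    have iso : ∀ u : Fin (stList l').length,
        (stList l').get u = rnk l' (l'.get (u.cast (length_stList l'))) := by
      intro u
      simp only [stList_eq]
      exact List.getElem_map _
    have hbmem : l'.get ((f t).cast (length_stList l')) ∈ l' := by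
      rw [List.get_eq_getElem]; exact List.getElem_mem _
    rw [← hf2 s t, ← hg, ← hg, iso (f s), iso (f t)]
    exact (rnk_lt_iff l' hbmem).symm

lemma stList_mem_Av {B : Set (List ℕ)} {π l' : List ℕ} (hπ : π ∈ Av B)
    (hsub : List.Sublist l' π) : stList l' ∈ Av B := by
  obtain ⟨hp, hav⟩ := hπ
  exact ⟨isPermList_stList (hsub.nodup (isPermList_nodup hp)),
    fun β hβ => stList_avoids hsub (hav β hβ)⟩

lemma stList_insertIdx {l : List ℕ} {v q : ℕ} (hq : q ≤ l.length)
    (hv : ∀ x ∈ l, x < v) :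
    stList (l.insertIdx q v) = insertMax (stList l) q := by
  have hperm := perm_insertIdx' l v q hq
  have hr1 : ∀ x ∈ l, rnk (l.insertIdx q v) x = rnk l x := by
    intro x hx
    unfold rnk
    rw [(hperm.filter _).length_eq, List.filter_cons_of_neg (by simp; exact hv x hx)]
  have hr2 : rnk (l.insertIdx q v) v = l.length + 1 := by
    unfold rnk
    rw [(hperm.filter _).length_eq, List.filter_cons_of_pos (by simp),
        List.filter_eq_self.2 (fun x hx => by simp; exact le_of_lt (hv x hx))]
    simp
  calc stList (l.insertIdx q v)
      = (l.insertIdx q v).map (rnk (l.insertIdx q v)) := rfl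
    _ = (l.map (rnk (l.insertIdx q v))).insertIdx q (rnk (l.insertIdx q v) v) :=
        map_insertIdx' _ _ _ _
    _ = (l.map (rnk l)).insertIdx q (l.length + 1) := by
        rw [hr2, List.map_congr_left (fun x hx => hr1 x hx)]
    _ = insertMax (stList l) q := by
        unfold insertMax
        rw [← stList_eq, length_stList]

lemma ofFn_get_sublist {π : List ℕ} {m : ℕ} (e : ℕ → ℕ)
    (he : ∀ i, i < m → e i < π.length) (hmono : ∀ i j, i < j → j < m → e i < e j) :
    List.Sublist (List.ofFn (fun i : Fin m => π.get ⟨e i.val, he i.val i.isLt⟩)) π := by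
  rw [List.sublist_iff_exists_fin_orderEmbedding_get_eq]
  have hlen : (List.ofFn (fun i : Fin m => π.get ⟨e i.val, he i.val i.isLt⟩)).length = m :=
    List.length_ofFn
  refine ⟨OrderEmbedding.ofStrictMono
    (fun i => ⟨e i.val, he i.val (by omega)⟩)
    (fun i j hij => by
      simp only [Fin.mk_lt_mk]
      exact hmono i.val j.val hij (by omega)), fun ix => ?_⟩
  simp only [List.get_ofFn, OrderEmbedding.coe_ofStrictMono]
  congr 1

lemma tops_le {B : Set (List ℕ)} {k : ℕ}
    (hk : ∀ π ∈ Av B, {i : ℕ | ActiveSite B π i}.ncard ≤ k)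
    {π : List ℕ} (hπ : π ∈ Av B) (r : ℕ) (hr : r ≤ 1)
    (hbt : ∀ s t : Fin π.length, s.val % 2 = r → t.val % 2 ≠ r → π.get s < π.get t) :
    (π.length + r) / 2 ≤ k := by
  set n := π.length with hn
  set T := (n + r) / 2 with hT
  set mB := (n + 1 - r) / 2 with hmB
  have hbot_lt : ∀ i, i < mB → 2 * i + r < n := by omega
  set bot : List ℕ := List.ofFn (fun i : Fin mB => π.get ⟨2 * i.val + r, hbot_lt i.val i.isLt⟩)
    with hbot
  have hbotlen : bot.length = mB := List.length_ofFn
  have hbotsub : List.Sublist bot π := ofFn_get_sublist _ hbot_lt (by omega)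
  have hσ : stList bot ∈ Av B := stList_mem_Av hπ hbotsub
  have hsite : ∀ p, p < T → ActiveSite B (stList bot) (p + 1 - r) := by
    intro p hp
    set q := p + 1 - r with hqdef
    have hq_le : q ≤ mB := by omega
    have hu_lt : 2 * q + r - 1 < n := by omega
    set v := π.get ⟨2 * q + r - 1, hu_lt⟩ with hv
    set eIdx : ℕ → ℕ := fun i =>
      if i < q then 2 * i + r else if i = q then 2 * q + r - 1 else 2 * i + r - 2 with heIdx
    have heb : ∀ i, i < mB + 1 → eIdx i < n := by
      intro i hi
      simp only [heIdx]
      split_ifs <;> omega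
    have hemono : ∀ i j, i < j → j < mB + 1 → eIdx i < eIdx j := by
      intro i j hij hj
      simp only [heIdx]
      split_ifs <;> omega
    set ext : List ℕ := List.ofFn (fun i : Fin (mB + 1) => π.get ⟨eIdx i.val, heb i.val i.isLt⟩)
      with hext
    have hextsub : List.Sublist ext π := ofFn_get_sublist _ heb hemono
    have hext_eq : ext = bot.insertIdx q v := by
      apply List.ext_getElem
      · rw [hext, List.length_ofFn, List.length_insertIdx_of_le_length (i := q) (as := bot) (hbotlen ▸ hq_le), hbotlen]
      · intro i h1 h2
        have hilt : i < mB + 1 := by rwa [hext, List.length_ofFn] at h1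
        rcases Nat.lt_trichotomy i q with hiq | rfl | hiq
        · rw [List.getElem_insertIdx_of_lt hiq h2]
          simp only [hext, hbot, List.getElem_ofFn]
          apply congrArg
          exact Fin.ext (by simp [heIdx, hiq])
        · rw [List.getElem_insertIdx_self h2]
          simp only [hext, List.getElem_ofFn, hv]
          apply congrArg
          exact Fin.ext (by simp [heIdx])
        · obtain ⟨d, rfl⟩ : ∃ d, i = q + d + 1 := ⟨i - q - 1, by omega⟩
          rw [List.getElem_insertIdx_of_gt (by omega) h2]
          simp only [hext, hbot, List.getElem_ofFn]
          apply congrArg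
          refine Fin.ext ?_
          simp only [heIdx]
          split_ifs <;> omega
    have hvgt : ∀ x ∈ bot, x < v := by
      intro x hx
      rw [hbot, List.mem_ofFn] at hx
      obtain ⟨i, rfl⟩ := hx
      rw [hv]
      exact hbt ⟨2 * i.val + r, hbot_lt i.val i.isLt⟩ ⟨2 * q + r - 1, hu_lt⟩
        (by show (2 * i.val + r) % 2 = r; omega) (by show (2 * q + r - 1) % 2 ≠ r; omega)
    constructor
    · rw [length_stList, hbotlen]; exact hq_le
    · rw [← stList_insertIdx (hbotlen ▸ hq_le) hvgt, ← hext_eq]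
      exact stList_mem_Av hπ hextsub
  have hfin : {i : ℕ | ActiveSite B (stList bot) i}.Finite :=
    (Set.finite_Iic (stList bot).length).subset (fun i hi => hi.1)
  have hsubset : Set.Ico (1 - r) (T + 1 - r) ⊆ {i : ℕ | ActiveSite B (stList bot) i} := by
    intro i hi
    obtain ⟨h1, h2⟩ := hi
    have hs := hsite (i + r - 1) (by omega)
    have he : i + r - 1 + 1 - r = i := by omega
    rwa [he] at hs
  have hcard := Set.ncard_le_ncard hsubset hfin
  have hico : (Set.Ico (1 - r) (T + 1 - r)).ncard = T := by
    rw [← Finset.coe_Ico, Set.ncard_coe_finset, Nat.card_Ico]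
    omega
  have hkk := hk _ hσ
  omega

end Stmt1Aux

open Stmt1Aux in
/-- if there is a uniform bound on the number of active sites of
permutations in `Av(B)`, then `Av(B)` contains only finitely many vertical alternations. -/
theorem stmt1 (B : Set (List ℕ)) (hBfin : B.Finite) (hB : ∀ β ∈ B, IsPermList β)
    (h : ∃ k : ℕ, ∀ π ∈ Av B, {i : ℕ | ActiveSite B π i}.ncard ≤ k) :
    {π ∈ Av B | VerticalAlternation π}.Finite := by
  obtain ⟨k, hk⟩ := h
  have hbound : ∀ π ∈ Av B, VerticalAlternation π → π.length ≤ 2 * k + 1 := by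
    intro π hπ hva
    rcases hva with hva | hva
    · have := tops_le hk hπ 0 (by omega)
        (fun s t hs ht => hva t s (by omega) hs)
      omega
    · have := tops_le hk hπ 1 le_rfl
        (fun s t hs ht => hva s t hs (by omega))
      omega
  have hfin2 : {l : List (Fin (2 * k + 2)) | l.length ≤ 2 * k + 1}.Finite :=
    List.finite_length_le _ _
  refine (hfin2.image (fun l => l.map Fin.val)).subset ?_
  rintro π ⟨hπ, hva⟩
  have hlen := hbound π hπ hva
  have hmem : ∀ x ∈ π, x < 2 * k + 2 := fun x hx => by
    have := isPermList_mem_le hπ.1 hx; omega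
  refine ⟨π.pmap (fun x h => (⟨x, h⟩ : Fin (2 * k + 2))) hmem, ?_, ?_⟩
  · simpa using hlen
  · show List.map Fin.val (List.pmap (fun x h => (⟨x, h⟩ : Fin (2 * k + 2))) π hmem) = π
    rw [List.map_pmap]
    exact (List.pmap_eq_map _).trans (List.map_id _)
end

section
/- For every positive integer k there exists an integer N such that every vertical alternation of length at least N contains a vertical parallel alternation of length 2k or a vertical wedge alternation of length 2k. -/
section Aux

open Function Finset

/-- Erdős–Szekeres (copied from Mathlib's Archive). -/
theorem my_erdos_szekeres {α : Type*} [LinearOrder α] {r s n : ℕ} {f : Fin n → α}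
    (hn : r * s < n) (hf : Injective f) :
    (∃ t : Finset (Fin n), r < #t ∧ StrictMonoOn f ↑t) ∨
      ∃ t : Finset (Fin n), s < #t ∧ StrictAntiOn f ↑t := by
  let inc_sequences_ending_in : Fin n → Finset (Finset (Fin n)) := fun i =>
    univ.powerset.filter fun t => Finset.max t = i ∧ StrictMonoOn f ↑t
  let dec_sequences_ending_in : Fin n → Finset (Finset (Fin n)) := fun i =>
    univ.powerset.filter fun t => Finset.max t = i ∧ StrictAntiOn f ↑t
  have inc_i : ∀ i, {i} ∈ inc_sequences_ending_in i := fun i => by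
    simp [inc_sequences_ending_in, StrictMonoOn]
  have dec_i : ∀ i, {i} ∈ dec_sequences_ending_in i := fun i => by
    simp [dec_sequences_ending_in, StrictAntiOn]
  let ab' : Fin n → ℕ × ℕ := by
    intro i
    apply
      (max' ((inc_sequences_ending_in i).image card) (Nonempty.image ⟨{i}, inc_i i⟩ _),
        max' ((dec_sequences_ending_in i).image card) (Nonempty.image ⟨{i}, dec_i i⟩ _))
  generalize hab : ab' = ab
  rsuffices ⟨i, hi⟩ : ∃ i, r < (ab i).1 ∨ s < (ab i).2
  · refine Or.imp ?_ ?_ hi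
    on_goal 1 =>
      have : (ab i).1 ∈ image card (inc_sequences_ending_in i) := by
        simp only [← hab]; exact max'_mem _ (Nonempty.image ⟨{i}, inc_i i⟩ _)
    on_goal 2 =>
      have : (ab i).2 ∈ image card (dec_sequences_ending_in i) := by
        simp only [← hab]; exact max'_mem _ (Nonempty.image ⟨{i}, dec_i i⟩ _)
    all_goals
      intro hi
      rw [mem_image] at this
      obtain ⟨t, ht₁, ht₂⟩ := this
      refine ⟨t, by rwa [ht₂], ?_⟩
      rw [mem_filter] at ht₁
      apply ht₁.2.2
  have : Injective ab := by
    simp only [← hab]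
    apply Injective.of_lt_imp_ne
    intro i j k q
    injection q with q₁ q₂
    cases lt_or_gt_of_ne fun _ => ne_of_lt ‹i < j› (hf ‹f i = f j›)
    on_goal 1 =>
      apply ne_of_lt _ q₁
      have : (ab' i).1 ∈ image card (inc_sequences_ending_in i) := by exact max'_mem _ (Nonempty.image ⟨{i}, inc_i i⟩ _)
    on_goal 2 =>
      apply ne_of_lt _ q₂
      have : (ab' i).2 ∈ image card (dec_sequences_ending_in i) := by exact max'_mem _ (Nonempty.image ⟨{i}, dec_i i⟩ _)
    all_goals
      rw [Nat.lt_iff_add_one_le]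
      apply le_max'
      rw [mem_image] at this ⊢
      rcases this with ⟨t, ht₁, ht₂⟩
      rw [mem_filter] at ht₁
      have : t.max = i := by simp only [ht₁.2.1]
      refine ⟨insert j t, ?_, ?_⟩
      · rw [mem_filter]
        refine ⟨?_, ?_, ?_⟩
        · rw [mem_powerset]; apply subset_univ
        · convert max_insert (a := j) (s := t)
          rw [ht₁.2.1, max_eq_left]
          apply WithBot.coe_le_coe.mpr (le_of_lt ‹i < j›)
        simp only [StrictMonoOn, StrictAntiOn, coe_insert, Set.mem_insert_iff, mem_coe]
        rintro x ⟨rfl | _⟩ y ⟨rfl | _⟩ _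
        · apply (irrefl _ ‹j < j›).elim
        · exfalso
          apply not_le_of_gt (_root_.trans ‹i < j› ‹j < y›) (le_max_of_eq ‹y ∈ t› ‹t.max = i›)
        · first
          | apply lt_of_le_of_lt _ ‹f i < f j›
          | apply lt_of_lt_of_le ‹f j < f i› _
          rcases lt_or_eq_of_le (le_max_of_eq ‹x ∈ t› ‹t.max = i›) with (_ | rfl)
          · apply le_of_lt (ht₁.2.2 ‹x ∈ t› (mem_of_max ‹t.max = i›) ‹x < i›)
          · rfl
        · apply ht₁.2.2 ‹x ∈ t› ‹y ∈ t› ‹x < y›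
      · rw [card_insert_of_notMem, ht₂]
        intro
        apply not_le_of_gt ‹i < j› (le_max_of_eq ‹j ∈ t› ‹t.max = i›)
  by_contra! q
  let ran : Finset (ℕ × ℕ) := (range r).image Nat.succ ×ˢ (range s).image Nat.succ
  have : image ab univ ⊆ ran := by
    rintro ⟨x₁, x₂⟩
    simp only [ran, mem_image, exists_prop, mem_range, mem_univ, mem_product, true_and,
      Prod.ext_iff]
    rintro ⟨i, rfl, rfl⟩
    specialize q i
    have z : 1 ≤ (ab i).1 ∧ 1 ≤ (ab i).2 := by
      simp only [← hab]
      constructor <;>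
        · apply le_max'
          rw [mem_image]
          exact ⟨{i}, by solve_by_elim, card_singleton i⟩
    exact ⟨⟨(ab i).1 - 1, by omega⟩, (ab i).2 - 1, by omega⟩
  apply not_le_of_gt hn
  simpa [ran, Nat.succ_injective, card_image_of_injective, ‹Injective ab›] using card_le_card this

/-- Extract a strictly monotone/antitone subsequence of length `k`. -/
theorem exists_mono_sub {m k : ℕ} (u : Fin m → ℕ) (hu : Function.Injective u)
    (h : (k - 1) * (k - 1) < m) :
    ∃ g : Fin k → Fin m, StrictMono g ∧ (StrictMono (u ∘ g) ∨ StrictAnti (u ∘ g)) := by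
  rcases my_erdos_szekeres h hu with ⟨t, ht, hmono⟩ | ⟨t, ht, hmono⟩
  · have hk : k ≤ t.card := by omega
    refine ⟨fun i => ((t.orderIsoOfFin rfl) (Fin.castLE hk i) : Fin m), ?_, ?_⟩
    · intro a b hab
      have : (Fin.castLE hk a) < (Fin.castLE hk b) := hab
      exact (t.orderIsoOfFin rfl).lt_iff_lt.mpr this
    · exact Or.inl fun a b hab => hmono (Finset.coe_mem _) (Finset.coe_mem _)
        ((t.orderIsoOfFin rfl).lt_iff_lt.mpr hab)
  · have hk : k ≤ t.card := by omega
    refine ⟨fun i => ((t.orderIsoOfFin rfl) (Fin.castLE hk i) : Fin m), ?_, ?_⟩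
    · intro a b hab
      have : (Fin.castLE hk a) < (Fin.castLE hk b) := hab
      exact (t.orderIsoOfFin rfl).lt_iff_lt.mpr this
    · exact Or.inr fun a b hab => hmono (Finset.coe_mem _) (Finset.coe_mem _)
        ((t.orderIsoOfFin rfl).lt_iff_lt.mpr hab)

/-- The rank function. -/
def rkF {n : ℕ} (v : Fin n → ℕ) (s : Fin n) : ℕ :=
  (Finset.univ.filter (fun t => v t ≤ v s)).card

theorem rk_lt_iff {n : ℕ} {v : Fin n → ℕ} (hv : Function.Injective v) (s t : Fin n) :
    rkF v s < rkF v t ↔ v s < v t := by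
  constructor
  · intro h
    by_contra hle
    push_neg at hle
    have hsub : (Finset.univ.filter (fun x => v x ≤ v t)) ⊆
        (Finset.univ.filter (fun x => v x ≤ v s)) := by
      intro x hx
      simp only [Finset.mem_filter, Finset.mem_univ, true_and] at hx ⊢
      omega
    have := Finset.card_le_card hsub
    unfold rkF at h
    omega
  · intro h
    apply Finset.card_lt_card
    rw [Finset.ssubset_iff_of_subset]
    · exact ⟨t, by simp, by simp; omega⟩
    · intro x hx
      simp only [Finset.mem_filter, Finset.mem_univ, true_and] at hx ⊢
      omega

theorem rk_pos {n : ℕ} (v : Fin n → ℕ) (s : Fin n) : 1 ≤ rkF v s := by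
  have : s ∈ Finset.univ.filter (fun t => v t ≤ v s) := by simp
  have := Finset.card_pos.mpr ⟨s, this⟩
  simpa [rkF] using this

theorem rk_le {n : ℕ} (v : Fin n → ℕ) (s : Fin n) : rkF v s ≤ n := by
  have := Finset.card_filter_le (Finset.univ : Finset (Fin n)) (fun t => v t ≤ v s)
  simpa [rkF] using this

theorem rk_injective {n : ℕ} {v : Fin n → ℕ} (hv : Function.Injective v) :
    Function.Injective (rkF v) := by
  intro a b hab
  by_contra hne
  rcases Ne.lt_or_gt (fun h : v a = v b => hne (hv h)) with h | h
  · exact absurd ((rk_lt_iff hv a b).mpr h) (by omega)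
  · exact absurd ((rk_lt_iff hv b a).mpr h) (by omega)

theorem isPermList_ofFn_rk {n : ℕ} (v : Fin n → ℕ) (hv : Function.Injective v) :
    IsPermList (List.ofFn (rkF v)) := by
  unfold IsPermList
  have hlen : (List.ofFn (rkF v)).length = n := List.length_ofFn
  rw [hlen]
  apply List.Subperm.perm_of_length_le
  · apply List.subperm_of_subset
    · exact List.nodup_ofFn.mpr (rk_injective hv)
    · intro x hx
      rw [List.mem_ofFn] at hx
      obtain ⟨s, rfl⟩ := hx
      simp only [List.mem_map, List.mem_range]
      exact ⟨rkF v s - 1, by have := rk_pos v s; have := rk_le v s; omega⟩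
  · simp [hlen]

end Aux

/-- every sufficiently long vertical alternation contains a vertical
parallel alternation of length `2k` or a vertical wedge alternation of length `2k`. -/
theorem stmt2 (k : ℕ) (hk : 0 < k) :
    ∃ N : ℕ, ∀ π : List ℕ, IsPermList π → VerticalAlternation π → N ≤ π.length →
      ∃ β : List ℕ, IsPermList β ∧ β.length = 2 * k ∧
        (IsVertParallel β ∨ IsVertWedge β) ∧ PContains π β := by
  obtain ⟨a, ha⟩ : ∃ a, a = (k - 1) * (k - 1) := ⟨_, rfl⟩
  obtain ⟨b, hb⟩ : ∃ b, b = a * a := ⟨_, rfl⟩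
  refine ⟨2 * (b + 1), ?_⟩
  intro π hπ hva hN
  have hnodup : π.Nodup := by
    have hnd : ((List.range π.length).map (· + 1)).Nodup :=
      (List.nodup_range).map (fun x y h => by omega)
    exact hπ.nodup_iff.mpr hnd
  have hget : Function.Injective π.get := List.nodup_iff_injective_get.mp hnodup
  set n := π.length with hn
  set m := n / 2 with hm
  have hmb : b < m := by omega
  have h2 : ∀ i : Fin m, 2 * i.val + 1 < n := fun i => by have := i.isLt; omega
  let E : Fin m → ℕ := fun i => π.get ⟨2 * i.val, by have := h2 i; omega⟩
  let O : Fin m → ℕ := fun i => π.get ⟨2 * i.val + 1, h2 i⟩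
  have hEinj : Function.Injective E := by
    intro x y hxy
    have h1 := hget hxy
    have h3 : 2 * x.val = 2 * y.val := congrArg Fin.val h1
    exact Fin.ext (by omega)
  have hOinj : Function.Injective O := by
    intro x y hxy
    have h1 := hget hxy
    have h3 : 2 * x.val + 1 = 2 * y.val + 1 := congrArg Fin.val h1
    exact Fin.ext (by omega)
  obtain ⟨g1, hg1, hEmono⟩ := exists_mono_sub (k := a + 1) E hEinj
    (by have h4 : a * a < m := hb ▸ hmb; simpa using h4)
  obtain ⟨g2, hg2, hOmono⟩ := exists_mono_sub (k := k) (O ∘ g1) (hOinj.comp hg1.injective)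
    (by rw [← ha]; omega)
  let p : Fin k → Fin m := g1 ∘ g2
  have hp : StrictMono p := hg1.comp hg2
  have hEp : StrictMono (E ∘ p) ∨ StrictAnti (E ∘ p) := by
    rcases hEmono with h | h
    · exact Or.inl (h.comp hg2)
    · exact Or.inr (h.comp_strictMono hg2)
  have hOp : StrictMono (O ∘ p) ∨ StrictAnti (O ∘ p) := hOmono
  have hq' : ∀ s : Fin (2 * k), s.val / 2 < k := fun s => by have := s.isLt; omega
  let q : Fin (2 * k) → Fin m := fun s => p ⟨s.val / 2, hq' s⟩
  have hfb : ∀ s : Fin (2 * k), 2 * (q s).val + s.val % 2 < n := fun s => by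
    have h1 := (q s).isLt; have h3 := s.isLt; omega
  let F : Fin (2 * k) → Fin n := fun s => ⟨2 * (q s).val + s.val % 2, hfb s⟩
  have hqlt : ∀ s t : Fin (2 * k), s.val / 2 < t.val / 2 → (q s).val < (q t).val := by
    intro s t h
    exact hp (show (⟨s.val / 2, hq' s⟩ : Fin k) < ⟨t.val / 2, hq' t⟩ from h)
  have hqeq : ∀ s t : Fin (2 * k), s.val / 2 = t.val / 2 → (q s).val = (q t).val := by
    intro s t h
    have : (⟨s.val / 2, hq' s⟩ : Fin k) = ⟨t.val / 2, hq' t⟩ := Fin.ext h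
    show (p _).val = (p _).val
    rw [this]
  have hF : StrictMono F := by
    intro s t hst
    have hst' : s.val < t.val := hst
    show (2 * (q s).val + s.val % 2) < 2 * (q t).val + t.val % 2
    rcases Nat.lt_or_ge (s.val / 2) (t.val / 2) with h | h
    · have := hqlt s t h; omega
    · have h' : s.val / 2 = t.val / 2 := by omega
      have := hqeq s t h'
      omega
  let v : Fin (2 * k) → ℕ := fun s => π.get (F s)
  have hvinj : Function.Injective v := fun x y h => hF.injective (hget h)
  let β : List ℕ := List.ofFn (rkF v)
  have hβlen : β.length = 2 * k := List.length_ofFn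
  have hβget : ∀ s : Fin β.length, β.get s = rkF v (Fin.cast hβlen s) := fun s =>
    List.get_ofFn _ _
  have hcmp : ∀ s t : Fin β.length,
      (β.get s < β.get t ↔ v (Fin.cast hβlen s) < v (Fin.cast hβlen t)) := by
    intro s t
    rw [hβget, hβget, rk_lt_iff hvinj]
  have hpar : ∀ s : Fin (2 * k), (F s).val % 2 = s.val % 2 := fun s => by
    show (2 * (q s).val + s.val % 2) % 2 = s.val % 2; omega
  have hVA : VerticalAlternation β := by
    rcases hva with hcase | hcase
    · left
      intro s t hs ht
      rw [hcmp]
      exact hcase (F (Fin.cast hβlen s)) (F (Fin.cast hβlen t))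
        (by rw [hpar]; exact hs) (by rw [hpar]; exact ht)
    · right
      intro s t hs ht
      rw [hcmp]
      exact hcase (F (Fin.cast hβlen s)) (F (Fin.cast hβlen t))
        (by rw [hpar]; exact hs) (by rw [hpar]; exact ht)
  have hvE : ∀ s : Fin (2 * k), s.val % 2 = 0 → v s = (E ∘ p) ⟨s.val / 2, hq' s⟩ := by
    intro s hs
    show π.get _ = π.get _
    congr 1
    exact Fin.ext (by show 2 * (q s).val + s.val % 2 = 2 * (q s).val; omega)
  have hvO : ∀ s : Fin (2 * k), s.val % 2 = 1 → v s = (O ∘ p) ⟨s.val / 2, hq' s⟩ := by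
    intro s hs
    show π.get _ = π.get _
    congr 1
    exact Fin.ext (by show 2 * (q s).val + s.val % 2 = 2 * (q s).val + 1; omega)
  have hres : ∀ (r : ℕ) (w : Fin m → ℕ),
      (∀ s : Fin (2 * k), s.val % 2 = r → v s = (w ∘ p) ⟨s.val / 2, hq' s⟩) →
      (StrictMono (w ∘ p) → IncOnRes β r) ∧ (StrictAnti (w ∘ p) → DecOnRes β r) := by
    intro r w hw
    constructor
    · intro hmono s t hst hsr htr
      have hd : (s.val) / 2 < (t.val) / 2 := by
        have h1 : s.val < t.val := hst
        omega
      rw [hcmp, hw (Fin.cast hβlen s) hsr, hw (Fin.cast hβlen t) htr]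
      exact hmono (show (⟨s.val / 2, hq' (Fin.cast hβlen s)⟩ : Fin k)
        < ⟨t.val / 2, hq' (Fin.cast hβlen t)⟩ from hd)
    · intro hanti s t hst hsr htr
      have hd : (s.val) / 2 < (t.val) / 2 := by
        have h1 : s.val < t.val := hst
        omega
      rw [hcmp, hw (Fin.cast hβlen s) hsr, hw (Fin.cast hβlen t) htr]
      exact hanti (show (⟨s.val / 2, hq' (Fin.cast hβlen s)⟩ : Fin k)
        < ⟨t.val / 2, hq' (Fin.cast hβlen t)⟩ from hd)
  have hEfact := hres 0 E hvE
  have hOfact := hres 1 O hvO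
  have heven : Even β.length := by rw [hβlen]; exact even_two_mul k
  refine ⟨β, isPermList_ofFn_rk v hvinj, hβlen, ?_, ?_⟩
  · rcases hEp with hE | hE <;> rcases hOp with hO | hO
    · exact Or.inl ⟨hVA, heven, Or.inl ⟨hEfact.1 hE, hOfact.1 hO⟩⟩
    · exact Or.inr ⟨hVA, heven, Or.inl ⟨hEfact.1 hE, hOfact.2 hO⟩⟩
    · exact Or.inr ⟨hVA, heven, Or.inr ⟨hEfact.2 hE, hOfact.1 hO⟩⟩
    · exact Or.inl ⟨hVA, heven, Or.inr ⟨hEfact.2 hE, hOfact.2 hO⟩⟩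
  · refine ⟨fun s => F (Fin.cast hβlen s), ?_, ?_⟩
    · intro s t h
      exact hF (show Fin.cast hβlen s < Fin.cast hβlen t from h)
    · intro s t
      rw [hcmp]
end

section
/- Let B be a finite set of permutations. Av(B) contains only finitely many of the vertical parallel alternations σ_m (m ≥ 1) if and only if B contains a permutation that avoids all three of the permutations 123, 3142, and 3412. -/
lemma sigmaAlt_length (m : ℕ) : (sigmaAlt m).length = 2*m := by simp [sigmaAlt]

lemma sigma_get (m : ℕ) (j : Fin (sigmaAlt m).length) :
    (sigmaAlt m).get j = if j.val % 2 = 0 then m - j.val/2 else 2*m - j.val/2 := by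
  rw [List.get_eq_getElem]
  simp [sigmaAlt]

lemma sigma_lt (m : ℕ) (j : Fin (sigmaAlt m).length) : j.val < 2*m := by
  have := j.isLt; simpa [sigmaAlt_length] using this

lemma pcontains_trans {π β γ : List ℕ} (h1 : PContains π β) (h2 : PContains β γ) :
    PContains π γ := by
  obtain ⟨f, hf, hf2⟩ := h1
  obtain ⟨g, hg, hg2⟩ := h2
  exact ⟨f ∘ g, hf.comp hg, fun s t => (hf2 _ _).trans (hg2 s t)⟩

-- ascent structure in sigmaAlt
lemma sigma_asc (m : ℕ) {j k : Fin (sigmaAlt m).length} (hjk : j < k)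
    (hv : (sigmaAlt m).get j < (sigmaAlt m).get k) :
    j.val % 2 = 0 ∧ k.val % 2 = 1 := by
  have hj := sigma_get m j
  have hk := sigma_get m k
  have hj2 := sigma_lt m j
  have hk2 := sigma_lt m k
  have hjk' : j.val < k.val := hjk
  rw [hj, hk] at hv
  split_ifs at hv <;> omega

lemma sigma_avoids_123 (m : ℕ) : PAvoids (sigmaAlt m) [1,2,3] := by
  rintro ⟨f, hmono, hiff⟩
  have l3 : ([1,2,3] : List ℕ).length = 3 := rfl
  have h01 := (hiff ⟨0, by norm_num⟩ ⟨1, by norm_num⟩).mpr (by norm_num)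
  have h12 := (hiff ⟨1, by norm_num⟩ ⟨2, by norm_num⟩).mpr (by norm_num)
  have m01 : f ⟨0, by norm_num⟩ < f ⟨1, by norm_num⟩ := hmono (by norm_num [Fin.lt_def])
  have m12 : f ⟨1, by norm_num⟩ < f ⟨2, by norm_num⟩ := hmono (by norm_num [Fin.lt_def])
  have a1 := sigma_asc m m01 h01
  have a2 := sigma_asc m m12 h12
  omega

lemma sigma_avoids_3142 (m : ℕ) : PAvoids (sigmaAlt m) [3,1,4,2] := by
  rintro ⟨f, hmono, hiff⟩
  have h02 := (hiff ⟨0, by norm_num⟩ ⟨2, by norm_num⟩).mpr (by norm_num)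
  have h13 := (hiff ⟨1, by norm_num⟩ ⟨3, by norm_num⟩).mpr (by norm_num)
  have h30 := (hiff ⟨3, by norm_num⟩ ⟨0, by norm_num⟩).mpr (by norm_num)
  have m02 : f ⟨0, by norm_num⟩ < f ⟨2, by norm_num⟩ := hmono (by norm_num [Fin.lt_def])
  have m13 : f ⟨1, by norm_num⟩ < f ⟨3, by norm_num⟩ := hmono (by norm_num [Fin.lt_def])
  have a1 := sigma_asc m m02 h02
  have a2 := sigma_asc m m13 h13
  have g0 := sigma_get m (f ⟨0, by norm_num⟩)
  have g3 := sigma_get m (f ⟨3, by norm_num⟩)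
  have b0 := sigma_lt m (f ⟨0, by norm_num⟩)
  have b3 := sigma_lt m (f ⟨3, by norm_num⟩)
  rw [g0, g3] at h30
  split_ifs at h30 <;> omega

lemma sigma_avoids_3412 (m : ℕ) : PAvoids (sigmaAlt m) [3,4,1,2] := by
  rintro ⟨f, hmono, hiff⟩
  have h01 := (hiff ⟨0, by norm_num⟩ ⟨1, by norm_num⟩).mpr (by norm_num)
  have h23 := (hiff ⟨2, by norm_num⟩ ⟨3, by norm_num⟩).mpr (by norm_num)
  have h30 := (hiff ⟨3, by norm_num⟩ ⟨0, by norm_num⟩).mpr (by norm_num)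
  have m01 : f ⟨0, by norm_num⟩ < f ⟨1, by norm_num⟩ := hmono (by norm_num [Fin.lt_def])
  have m23 : f ⟨2, by norm_num⟩ < f ⟨3, by norm_num⟩ := hmono (by norm_num [Fin.lt_def])
  have a1 := sigma_asc m m01 h01
  have a2 := sigma_asc m m23 h23
  have g0 := sigma_get m (f ⟨0, by norm_num⟩)
  have g3 := sigma_get m (f ⟨3, by norm_num⟩)
  have b0 := sigma_lt m (f ⟨0, by norm_num⟩)
  have b3 := sigma_lt m (f ⟨3, by norm_num⟩)
  rw [g0, g3] at h30
  split_ifs at h30 <;> omega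

lemma isPermList_sigma (m : ℕ) : IsPermList (sigmaAlt m) := by
  unfold IsPermList
  rw [sigmaAlt_length]
  apply List.Subperm.perm_of_length_le
  · apply List.Nodup.subperm
    · apply List.Nodup.map_on _ (List.nodup_range)
      intro x hx y hy hxy
      simp only [List.mem_range] at hx hy
      split_ifs at hxy <;> omega
    · intro x hx
      simp only [sigmaAlt, List.mem_map, List.mem_range] at hx ⊢
      obtain ⟨j, hj, rfl⟩ := hx
      split_ifs with h
      · exact ⟨m - j/2 - 1, by omega, by omega⟩
      · exact ⟨2*m - j/2 - 1, by omega, by omega⟩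
  · simp [sigmaAlt]


lemma get123 (u : Fin ([1,2,3] : List ℕ).length) :
    ([1,2,3] : List ℕ).get u = if u.val = 0 then 1 else if u.val = 1 then 2 else 3 := by
  rcases u with ⟨u, hu⟩
  have hu3 : u < 3 := hu
  interval_cases u <;> rfl

lemma get3142 (u : Fin ([3,1,4,2] : List ℕ).length) :
    ([3,1,4,2] : List ℕ).get u =
      if u.val = 0 then 3 else if u.val = 1 then 1 else if u.val = 2 then 4 else 2 := by
  rcases u with ⟨u, hu⟩
  have hu4 : u < 4 := hu
  interval_cases u <;> rfl

lemma get3412 (u : Fin ([3,4,1,2] : List ℕ).length) :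
    ([3,4,1,2] : List ℕ).get u =
      if u.val = 0 then 3 else if u.val = 1 then 4 else if u.val = 2 then 1 else 2 := by
  rcases u with ⟨u, hu⟩
  have hu4 : u < 4 := hu
  interval_cases u <;> rfl

lemma contains123 {π : List ℕ} {i j k : Fin π.length} (hij : i < j) (hjk : j < k)
    (h1 : π.get i < π.get j) (h2 : π.get j < π.get k) : PContains π [1,2,3] := by
  have h3 : π.get i < π.get k := h1.trans h2
  refine ⟨fun s => if s.val = 0 then i else if s.val = 1 then j else k, ?_, ?_⟩
  · intro s t hst
    have hst' : s.val < t.val := hst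
    have ht : t.val < 3 := t.isLt
    simp only
    split_ifs <;> first | assumption | exact hij.trans hjk | exact absurd hst' (by omega)
  · intro s t
    rw [get123 s, get123 t]
    simp only
    split_ifs <;> omega

lemma contains3142 {π : List ℕ} {i j k l : Fin π.length} (hij : i < j) (hjk : j < k)
    (hkl : k < l)
    (v1 : π.get j < π.get l) (v2 : π.get l < π.get i) (v3 : π.get i < π.get k) :
    PContains π [3,1,4,2] := by
  refine ⟨fun s => if s.val = 0 then i else if s.val = 1 then j else if s.val = 2 then k
    else l, ?_, ?_⟩
  · intro s t hst
    have hst' : s.val < t.val := hst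
    have ht : t.val < 4 := t.isLt
    simp only
    split_ifs <;>
      first
        | assumption
        | exact hij.trans hjk
        | exact hjk.trans hkl
        | exact (hij.trans hjk).trans hkl
        | exact absurd hst' (by omega)
  · intro s t
    rw [get3142 s, get3142 t]
    simp only
    split_ifs <;> omega

lemma contains3412 {π : List ℕ} {i j k l : Fin π.length} (hij : i < j) (hjk : j < k)
    (hkl : k < l)
    (v1 : π.get k < π.get l) (v2 : π.get l < π.get i) (v3 : π.get i < π.get j) :
    PContains π [3,4,1,2] := by
  refine ⟨fun s => if s.val = 0 then i else if s.val = 1 then j else if s.val = 2 then k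
    else l, ?_, ?_⟩
  · intro s t hst
    have hst' : s.val < t.val := hst
    have ht : t.val < 4 := t.isLt
    simp only
    split_ifs <;>
      first
        | assumption
        | exact hij.trans hjk
        | exact hjk.trans hkl
        | exact (hij.trans hjk).trans hkl
        | exact absurd hst' (by omega)
  · intro s t
    rw [get3412 s, get3412 t]
    simp only
    split_ifs <;> omega


lemma clash {β : List ℕ} (hnd : β.Nodup) {i j s t : Fin β.length} (hij : i < j) (hst : s < t)
    (v1 : β.get i < β.get j) (v2 : β.get j ≤ β.get s) (v3 : β.get s < β.get t) :
    PContains β [1,2,3] ∨ PContains β [3,1,4,2] ∨ PContains β [3,4,1,2] := by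
  rcases eq_or_lt_of_le v2 with heq | hlt
  · have hjs : j = s := hnd.get_inj_iff.mp heq
    exact Or.inl (contains123 hij (hjs ▸ hst) v1 (heq ▸ v3))
  · rcases lt_trichotomy i s with his | heq | hsi
    · exact Or.inl (contains123 his hst (v1.trans hlt) v3)
    · exfalso
      have hv : β.get i < β.get s := v1.trans hlt
      rw [heq] at hv
      exact lt_irrefl _ hv
    · rcases lt_trichotomy t i with hti | heq | hit
      · exact Or.inr (Or.inr (contains3412 hst hti hij v1 hlt v3))
      · exfalso
        have hv : β.get i < β.get t := v1.trans (hlt.trans v3)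
        rw [heq] at hv
        exact lt_irrefl _ hv
      · rcases lt_trichotomy t j with htj | heq | hjt
        · exact Or.inr (Or.inl (contains3142 hsi hit htj v1 hlt v3))
        · exfalso
          have hv : β.get j < β.get t := hlt.trans v3
          rw [heq] at hv
          exact lt_irrefl _ hv
        · exact Or.inl (contains123 hij hjt v1 (hlt.trans v3))

lemma exists_cut (β : List ℕ) (hnd : β.Nodup) (hpos : ∀ x ∈ β, 1 ≤ x)
    (h1 : PAvoids β [1,2,3]) (h2 : PAvoids β [3,1,4,2]) (h3 : PAvoids β [3,4,1,2]) :
    ∃ c, (∀ s t : Fin β.length, s < t → β.get s ≤ c → β.get t ≤ c → β.get t < β.get s) ∧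
         (∀ s t : Fin β.length, s < t → c < β.get s → c < β.get t → β.get t < β.get s) := by
  by_cases hasc : ∃ i j : Fin β.length, i < j ∧ β.get i < β.get j
  · set S : Set ℕ := {v | ∃ i j : Fin β.length, i < j ∧ β.get i < β.get j ∧ β.get j = v}
      with hS
    have hne : S.Nonempty := by
      obtain ⟨i, j, hij, hv⟩ := hasc
      exact ⟨β.get j, i, j, hij, hv, rfl⟩
    obtain ⟨i0, j0, hij0, hv0, hval0⟩ := Nat.sInf_mem hne
    have hpos0 : 1 ≤ sInf S := by
      rw [← hval0]
      exact hpos _ (List.get_mem β j0)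
    refine ⟨sInf S - 1, ?_, ?_⟩
    · intro s t hst hs ht
      rcases lt_trichotomy (β.get s) (β.get t) with hlt | heq | hgt
      · exfalso
        have hmem : β.get t ∈ S := ⟨s, t, hst, hlt, rfl⟩
        have := Nat.sInf_le hmem
        omega
      · exact absurd (hnd.get_inj_iff.mp heq) (ne_of_lt hst)
      · exact hgt
    · intro s t hst hs ht
      rcases lt_trichotomy (β.get s) (β.get t) with hlt | heq | hgt
      · exfalso
        have hv2 : β.get j0 ≤ β.get s := by rw [hval0]; omega
        rcases clash hnd hij0 hst hv0 hv2 hlt with hc | hc | hc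
        exacts [h1 hc, h2 hc, h3 hc]
      · exact absurd (hnd.get_inj_iff.mp heq) (ne_of_lt hst)
      · exact hgt
  · push_neg at hasc
    refine ⟨0, ?_, ?_⟩
    · intro s t hst hs ht
      exfalso
      have := hpos (β.get s) (List.get_mem β s)
      omega
    · intro s t hst _ _
      rcases lt_trichotomy (β.get s) (β.get t) with hlt | heq | hgt
      · exact absurd hlt (by have := hasc s t hst; omega)
      · exact absurd (hnd.get_inj_iff.mp heq) (ne_of_lt hst)
      · exact hgt

lemma contains_of_cut (β : List ℕ) (c m : ℕ) (hm : β.length ≤ m)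
    (hlow : ∀ s t : Fin β.length, s < t → β.get s ≤ c → β.get t ≤ c → β.get t < β.get s)
    (hhigh : ∀ s t : Fin β.length, s < t → c < β.get s → c < β.get t → β.get t < β.get s) :
    PContains (sigmaAlt m) β := by
  have hbnd : ∀ u : Fin β.length,
      2*(m - β.length + u.val) + (if β.get u ≤ c then 0 else 1) < (sigmaAlt m).length := by
    intro u
    rw [sigmaAlt_length]
    have := u.isLt
    split_ifs <;> omega
  set f : Fin β.length → Fin (sigmaAlt m).length := fun u => ⟨_, hbnd u⟩ with hf
  have gval : ∀ u : Fin β.length,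
      (sigmaAlt m).get (f u) =
        if β.get u ≤ c then β.length - u.val else m + β.length - u.val := by
    intro u
    have hu := u.isLt
    rw [sigma_get]
    have hval : (f u).val = 2*(m - β.length + u.val) + (if β.get u ≤ c then 0 else 1) := rfl
    rw [hval]
    by_cases huc : β.get u ≤ c
    · simp only [if_pos huc]
      split_ifs <;> omega
    · simp only [if_neg huc]
      split_ifs <;> omega
  refine ⟨f, ?_, ?_⟩
  · intro s t hst
    have hst' : s.val < t.val := hst
    have hvs : (f s).val = 2*(m - β.length + s.val) + (if β.get s ≤ c then 0 else 1) := rfl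
    have hvt : (f t).val = 2*(m - β.length + t.val) + (if β.get t ≤ c then 0 else 1) := rfl
    rw [Fin.lt_def, hvs, hvt]
    split_ifs <;> omega
  · intro s t
    rw [gval s, gval t]
    have hs : s.val < β.length := s.isLt
    have ht : t.val < β.length := t.isLt
    by_cases hsc : β.get s ≤ c <;> by_cases htc : β.get t ≤ c
    · rw [if_pos hsc, if_pos htc]
      constructor
      · intro h
        have hts : t < s := show t.val < s.val by omega
        exact hlow t s hts htc hsc
      · intro h
        have hts : t.val < s.val := by
          rcases lt_trichotomy s t with h' | h' | h'
          · have := hlow s t h' hsc htc; omega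
          · rw [h'] at h; omega
          · exact h'
        omega
    · rw [if_pos hsc, if_neg htc]
      have hc : c < β.get t := not_le.mp htc
      constructor
      · intro _; omega
      · intro _; omega
    · rw [if_neg hsc, if_pos htc]
      have hc : c < β.get s := not_le.mp hsc
      constructor
      · intro h; omega
      · intro h; omega
    · rw [if_neg hsc, if_neg htc]
      constructor
      · intro h
        have hts : t < s := show t.val < s.val by omega
        exact hhigh t s hts (not_le.mp htc) (not_le.mp hsc)
      · intro h
        have hts : t.val < s.val := by
          rcases lt_trichotomy s t with h' | h' | h'
          · have := hhigh s t h' (not_le.mp hsc) (not_le.mp htc); omega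
          · rw [h'] at h; omega
          · exact h'
        omega

lemma isPermList_nodup {l : List ℕ} (h : IsPermList l) : l.Nodup := by
  apply h.nodup_iff.mpr
  exact (List.nodup_range).map (fun a b => by omega)

lemma isPermList_pos {l : List ℕ} (h : IsPermList l) : ∀ x ∈ l, 1 ≤ x := by
  intro x hx
  have hmem := h.subset hx
  simp only [List.mem_map, List.mem_range] at hmem
  omega


/-- `Av(B)` contains only finitely many of the vertical parallel
alternations `σ_m` iff `B` contains a permutation avoiding `123`, `3142` and `3412`. -/
theorem stmt3 (B : Set (List ℕ)) (hBfin : B.Finite) (hB : ∀ β ∈ B, IsPermList β) :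
    {π | (∃ m : ℕ, 1 ≤ m ∧ π = sigmaAlt m) ∧ π ∈ Av B}.Finite ↔
      ∃ β ∈ B, PAvoids β [1,2,3] ∧ PAvoids β [3,1,4,2] ∧ PAvoids β [3,4,1,2] := by
  constructor
  · intro hfin
    by_contra hno
    have hmem : ∀ m : ℕ, 1 ≤ m →
        sigmaAlt m ∈ {π | (∃ m' : ℕ, 1 ≤ m' ∧ π = sigmaAlt m') ∧ π ∈ Av B} := by
      intro m hm
      refine ⟨⟨m, hm, rfl⟩, isPermList_sigma m, ?_⟩
      intro β hβ hcon
      exact hno ⟨β, hβ,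
        fun hc => sigma_avoids_123 m (pcontains_trans hcon hc),
        fun hc => sigma_avoids_3142 m (pcontains_trans hcon hc),
        fun hc => sigma_avoids_3412 m (pcontains_trans hcon hc)⟩
    have hinj : Set.InjOn sigmaAlt (Set.Ici 1) := by
      intro a _ b _ hab
      have := congrArg List.length hab
      rw [sigmaAlt_length, sigmaAlt_length] at this
      omega
    have hinf : {π | (∃ m : ℕ, 1 ≤ m ∧ π = sigmaAlt m) ∧ π ∈ Av B}.Infinite := by
      apply Set.Infinite.mono (s := sigmaAlt '' Set.Ici 1)
      · rintro π ⟨m, hm, rfl⟩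
        exact hmem m hm
      · exact (Set.Ici_infinite 1).image hinj
    exact hinf hfin
  · rintro ⟨β, hβB, ha1, ha2, ha3⟩
    have hperm := hB β hβB
    obtain ⟨c, hlow, hhigh⟩ :=
      exists_cut β (isPermList_nodup hperm) (isPermList_pos hperm) ha1 ha2 ha3
    apply Set.Finite.subset ((Set.finite_Iio β.length).image sigmaAlt)
    rintro π ⟨⟨m, hm1, rfl⟩, hperm', hAv⟩
    refine ⟨m, ?_, rfl⟩
    by_contra hlt
    simp only [Set.mem_Iio, not_lt] at hlt
    exact hAv β hβB (contains_of_cut β c m hlt hlow hhigh)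
end

section
/- Let B be a finite set of permutations. Av(B) contains only finitely many vertical alternations if and only if B contains a permutation avoiding all of 123, 3142, 3412; a permutation avoiding both 132 and 312; a permutation avoiding all of 321, 2143, 2413; and a permutation avoiding both 213 and 231. -/
namespace S7

/-- direction-parametrized order -/
def ordR (b : Bool) (x y : ℕ) : Prop := if b then x < y else y < x

lemma ordR_true {x y : ℕ} : ordR true x y ↔ x < y := Iff.rfl
lemma ordR_false {x y : ℕ} : ordR false x y ↔ y < x := Iff.rfl

/-- value-threshold structure: entries ≤ k appear in `e₁` order, entries > k in `e₂` order -/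
def Struct (l : List ℕ) (k : ℕ) (e₁ e₂ : Bool) : Prop :=
  (∀ s t : Fin l.length, s < t → l.get s ≤ k → l.get t ≤ k → ordR e₁ (l.get s) (l.get t)) ∧
  (∀ s t : Fin l.length, s < t → k < l.get s → k < l.get t → ordR e₂ (l.get s) (l.get t))

lemma pcontains_trans {π β γ : List ℕ} (h1 : PContains π β) (h2 : PContains β γ) :
    PContains π γ := by
  obtain ⟨f, hf, hf2⟩ := h1
  obtain ⟨g, hg, hg2⟩ := h2
  exact ⟨f ∘ g, hf.comp hg, fun s t => (hf2 (g s) (g t)).trans (hg2 s t)⟩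

lemma isPermList_length_mem {l : List ℕ} (h : IsPermList l) {x : ℕ} (hx : x ∈ l) :
    1 ≤ x ∧ x ≤ l.length := by
  have := h.subset hx
  simp only [List.mem_map, List.mem_range] at this
  omega

lemma isPermList_nodup {l : List ℕ} (h : IsPermList l) : l.Nodup := by
  refine h.nodup_iff.mpr ?_
  exact List.nodup_range.map (add_left_injective 1)

lemma isPermList_reverse {l : List ℕ} (h : IsPermList l) : IsPermList l.reverse := by
  unfold IsPermList at *
  rw [List.length_reverse]
  exact (l.reverse_perm).trans h

lemma get_rev (l : List ℕ) (u : Fin l.reverse.length) (h : l.length - 1 - u.val < l.length) :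
    l.reverse.get u = l.get ⟨l.length - 1 - u.val, h⟩ := by
  simp only [List.get_eq_getElem, List.getElem_reverse]

lemma pcontains_reverse {π β : List ℕ} (h : PContains π β) :
    PContains π.reverse β.reverse := by
  obtain ⟨f, hf, hif⟩ := h
  have hπ : π.reverse.length = π.length := List.length_reverse
  have hβ : β.reverse.length = β.length := List.length_reverse
  have hne : ∀ s : Fin β.reverse.length, β.length - 1 - s.val < β.length := by
    intro s; have := s.isLt; omega
  have hlt : ∀ u : Fin β.reverse.length,
      π.length - 1 - (f ⟨β.length - 1 - u.val, hne u⟩).val < π.reverse.length := by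
    intro u
    have := (f ⟨β.length - 1 - u.val, hne u⟩).isLt
    omega
  refine ⟨fun u => ⟨π.length - 1 - (f ⟨β.length - 1 - u.val, hne u⟩).val, hlt u⟩, ?_, ?_⟩
  · intro s t hst
    have h1 : (⟨β.length - 1 - t.val, hne t⟩ : Fin β.length) < ⟨β.length - 1 - s.val, hne s⟩ := by
      simp only [Fin.mk_lt_mk]
      have h2 := t.isLt
      have h3 := hβ
      have h4 : s.val < t.val := hst
      omega
    have h5 := hf h1
    rw [Fin.lt_def] at h5
    have h6 := (f ⟨β.length - 1 - s.val, hne s⟩).isLt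
    simp only [Fin.lt_def]
    omega
  · intro s t
    have key : ∀ u : Fin β.reverse.length,
        π.reverse.get ⟨π.length - 1 - (f ⟨β.length - 1 - u.val, hne u⟩).val, hlt u⟩ =
          π.get (f ⟨β.length - 1 - u.val, hne u⟩) := by
      intro u
      rw [get_rev _ _ (by have := (f ⟨β.length - 1 - u.val, hne u⟩).isLt; omega)]
      congr 1
      apply Fin.ext
      have := (f ⟨β.length - 1 - u.val, hne u⟩).isLt
      simp only []
      omega
    rw [key s, key t, get_rev β s (hne s), get_rev β t (hne t)]
    exact hif _ _

lemma get3 (x y z : ℕ) (s : Fin ([x,y,z] : List ℕ).length) :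
    ([x,y,z] : List ℕ).get s = if s.val = 0 then x else if s.val = 1 then y else z := by
  rcases s with ⟨sv, hs⟩
  simp only [List.length_cons, List.length_nil] at hs
  interval_cases sv <;> rfl

lemma get4 (x y z w : ℕ) (s : Fin ([x,y,z,w] : List ℕ).length) :
    ([x,y,z,w] : List ℕ).get s =
      if s.val = 0 then x else if s.val = 1 then y else if s.val = 2 then z else w := by
  rcases s with ⟨sv, hs⟩
  simp only [List.length_cons, List.length_nil] at hs
  interval_cases sv <;> rfl

lemma pcontains_123 {l : List ℕ} {a b c : Fin l.length} (hab : a < b) (hbc : b < c)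
    (v0 : l.get a < l.get b) (v1 : l.get b < l.get c) : PContains l [1,2,3] := by
  refine ⟨fun s => if s.val = 0 then a else if s.val = 1 then b else c, ?_, ?_⟩
  · intro s t hst
    have hs := s.isLt; have ht := t.isLt
    simp only [List.length_cons, List.length_nil] at hs ht
    have hst' : s.val < t.val := hst
    dsimp only
    simp only [Fin.lt_def] at *
    split_ifs <;> omega
  · intro s t
    have hs := s.isLt; have ht := t.isLt
    simp only [List.length_cons, List.length_nil] at hs ht
    rw [get3, get3]
    dsimp only
    split_ifs <;> omega

lemma pcontains_132 {l : List ℕ} {a b c : Fin l.length} (hab : a < b) (hbc : b < c)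
    (v0 : l.get a < l.get c) (v1 : l.get c < l.get b) : PContains l [1,3,2] := by
  refine ⟨fun s => if s.val = 0 then a else if s.val = 1 then b else c, ?_, ?_⟩
  · intro s t hst
    have hs := s.isLt; have ht := t.isLt
    simp only [List.length_cons, List.length_nil] at hs ht
    have hst' : s.val < t.val := hst
    dsimp only
    simp only [Fin.lt_def] at *
    split_ifs <;> omega
  · intro s t
    have hs := s.isLt; have ht := t.isLt
    simp only [List.length_cons, List.length_nil] at hs ht
    rw [get3, get3]
    dsimp only
    split_ifs <;> omega

lemma pcontains_312 {l : List ℕ} {a b c : Fin l.length} (hab : a < b) (hbc : b < c)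
    (v0 : l.get b < l.get c) (v1 : l.get c < l.get a) : PContains l [3,1,2] := by
  refine ⟨fun s => if s.val = 0 then a else if s.val = 1 then b else c, ?_, ?_⟩
  · intro s t hst
    have hs := s.isLt; have ht := t.isLt
    simp only [List.length_cons, List.length_nil] at hs ht
    have hst' : s.val < t.val := hst
    dsimp only
    simp only [Fin.lt_def] at *
    split_ifs <;> omega
  · intro s t
    have hs := s.isLt; have ht := t.isLt
    simp only [List.length_cons, List.length_nil] at hs ht
    rw [get3, get3]
    dsimp only
    split_ifs <;> omega

lemma pcontains_3142 {l : List ℕ} {a b c d : Fin l.length} (hab : a < b) (hbc : b < c) (hcd : c < d)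
    (v0 : l.get b < l.get d) (v1 : l.get d < l.get a) (v2 : l.get a < l.get c) : PContains l [3,1,4,2] := by
  refine ⟨fun s => if s.val = 0 then a else if s.val = 1 then b else if s.val = 2 then c else d, ?_, ?_⟩
  · intro s t hst
    have hs := s.isLt; have ht := t.isLt
    simp only [List.length_cons, List.length_nil] at hs ht
    have hst' : s.val < t.val := hst
    dsimp only
    simp only [Fin.lt_def] at *
    split_ifs <;> omega
  · intro s t
    have hs := s.isLt; have ht := t.isLt
    simp only [List.length_cons, List.length_nil] at hs ht
    rw [get4, get4]
    dsimp only
    split_ifs <;> omega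

lemma pcontains_3412 {l : List ℕ} {a b c d : Fin l.length} (hab : a < b) (hbc : b < c) (hcd : c < d)
    (v0 : l.get c < l.get d) (v1 : l.get d < l.get a) (v2 : l.get a < l.get b) : PContains l [3,4,1,2] := by
  refine ⟨fun s => if s.val = 0 then a else if s.val = 1 then b else if s.val = 2 then c else d, ?_, ?_⟩
  · intro s t hst
    have hs := s.isLt; have ht := t.isLt
    simp only [List.length_cons, List.length_nil] at hs ht
    have hst' : s.val < t.val := hst
    dsimp only
    simp only [Fin.lt_def] at *
    split_ifs <;> omega
  · intro s t
    have hs := s.isLt; have ht := t.isLt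
    simp only [List.length_cons, List.length_nil] at hs ht
    rw [get4, get4]
    dsimp only
    split_ifs <;> omega

lemma avoids_123_struct {l : List ℕ} {k : ℕ} (h : S7.Struct l k false false) :
    PAvoids l [1,2,3] := by
  rintro ⟨f, hf, hiff⟩
  obtain ⟨s0, hs0⟩ : ∃ s : Fin ([1,2,3] : List ℕ).length, s.val = 0 :=
    ⟨⟨0, by norm_num⟩, rfl⟩
  obtain ⟨s1, hs1⟩ : ∃ s : Fin ([1,2,3] : List ℕ).length, s.val = 1 :=
    ⟨⟨1, by norm_num⟩, rfl⟩
  obtain ⟨s2, hs2⟩ : ∃ s : Fin ([1,2,3] : List ℕ).length, s.val = 2 :=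
    ⟨⟨2, by norm_num⟩, rfl⟩
  have m01 : f s0 < f s1 := hf (by rw [Fin.lt_def, hs0, hs1]; norm_num)
  have m02 : f s0 < f s2 := hf (by rw [Fin.lt_def, hs0, hs2]; norm_num)
  have m12 : f s1 < f s2 := hf (by rw [Fin.lt_def, hs1, hs2]; norm_num)
  have w01 := hiff s0 s1
  rw [get3, get3, hs0, hs1] at w01; norm_num at w01
  have w02 := hiff s0 s2
  rw [get3, get3, hs0, hs2] at w02; norm_num at w02
  have w10 := hiff s1 s0
  rw [get3, get3, hs1, hs0] at w10; norm_num at w10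
  have w12 := hiff s1 s2
  rw [get3, get3, hs1, hs2] at w12; norm_num at w12
  have w20 := hiff s2 s0
  rw [get3, get3, hs2, hs0] at w20; norm_num at w20
  have w21 := hiff s2 s1
  rw [get3, get3, hs2, hs1] at w21; norm_num at w21
  have hl01 := h.1 (f s0) (f s1) m01
  have hh01 := h.2 (f s0) (f s1) m01
  have hl02 := h.1 (f s0) (f s2) m02
  have hh02 := h.2 (f s0) (f s2) m02
  have hl12 := h.1 (f s1) (f s2) m12
  have hh12 := h.2 (f s1) (f s2) m12
  simp only [S7.ordR_true, S7.ordR_false, List.get_eq_getElem] at *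
  omega

lemma avoids_3142_struct {l : List ℕ} {k : ℕ} (h : S7.Struct l k false false) :
    PAvoids l [3,1,4,2] := by
  rintro ⟨f, hf, hiff⟩
  obtain ⟨s0, hs0⟩ : ∃ s : Fin ([3,1,4,2] : List ℕ).length, s.val = 0 :=
    ⟨⟨0, by norm_num⟩, rfl⟩
  obtain ⟨s1, hs1⟩ : ∃ s : Fin ([3,1,4,2] : List ℕ).length, s.val = 1 :=
    ⟨⟨1, by norm_num⟩, rfl⟩
  obtain ⟨s2, hs2⟩ : ∃ s : Fin ([3,1,4,2] : List ℕ).length, s.val = 2 :=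
    ⟨⟨2, by norm_num⟩, rfl⟩
  obtain ⟨s3, hs3⟩ : ∃ s : Fin ([3,1,4,2] : List ℕ).length, s.val = 3 :=
    ⟨⟨3, by norm_num⟩, rfl⟩
  have m01 : f s0 < f s1 := hf (by rw [Fin.lt_def, hs0, hs1]; norm_num)
  have m02 : f s0 < f s2 := hf (by rw [Fin.lt_def, hs0, hs2]; norm_num)
  have m03 : f s0 < f s3 := hf (by rw [Fin.lt_def, hs0, hs3]; norm_num)
  have m12 : f s1 < f s2 := hf (by rw [Fin.lt_def, hs1, hs2]; norm_num)
  have m13 : f s1 < f s3 := hf (by rw [Fin.lt_def, hs1, hs3]; norm_num)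
  have m23 : f s2 < f s3 := hf (by rw [Fin.lt_def, hs2, hs3]; norm_num)
  have w01 := hiff s0 s1
  rw [get4, get4, hs0, hs1] at w01; norm_num at w01
  have w02 := hiff s0 s2
  rw [get4, get4, hs0, hs2] at w02; norm_num at w02
  have w03 := hiff s0 s3
  rw [get4, get4, hs0, hs3] at w03; norm_num at w03
  have w10 := hiff s1 s0
  rw [get4, get4, hs1, hs0] at w10; norm_num at w10
  have w12 := hiff s1 s2
  rw [get4, get4, hs1, hs2] at w12; norm_num at w12
  have w13 := hiff s1 s3
  rw [get4, get4, hs1, hs3] at w13; norm_num at w13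
  have w20 := hiff s2 s0
  rw [get4, get4, hs2, hs0] at w20; norm_num at w20
  have w21 := hiff s2 s1
  rw [get4, get4, hs2, hs1] at w21; norm_num at w21
  have w23 := hiff s2 s3
  rw [get4, get4, hs2, hs3] at w23; norm_num at w23
  have w30 := hiff s3 s0
  rw [get4, get4, hs3, hs0] at w30; norm_num at w30
  have w31 := hiff s3 s1
  rw [get4, get4, hs3, hs1] at w31; norm_num at w31
  have w32 := hiff s3 s2
  rw [get4, get4, hs3, hs2] at w32; norm_num at w32
  have hl01 := h.1 (f s0) (f s1) m01
  have hh01 := h.2 (f s0) (f s1) m01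
  have hl02 := h.1 (f s0) (f s2) m02
  have hh02 := h.2 (f s0) (f s2) m02
  have hl03 := h.1 (f s0) (f s3) m03
  have hh03 := h.2 (f s0) (f s3) m03
  have hl12 := h.1 (f s1) (f s2) m12
  have hh12 := h.2 (f s1) (f s2) m12
  have hl13 := h.1 (f s1) (f s3) m13
  have hh13 := h.2 (f s1) (f s3) m13
  have hl23 := h.1 (f s2) (f s3) m23
  have hh23 := h.2 (f s2) (f s3) m23
  simp only [S7.ordR_true, S7.ordR_false, List.get_eq_getElem] at *
  omega

lemma avoids_3412_struct {l : List ℕ} {k : ℕ} (h : S7.Struct l k false false) :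
    PAvoids l [3,4,1,2] := by
  rintro ⟨f, hf, hiff⟩
  obtain ⟨s0, hs0⟩ : ∃ s : Fin ([3,4,1,2] : List ℕ).length, s.val = 0 :=
    ⟨⟨0, by norm_num⟩, rfl⟩
  obtain ⟨s1, hs1⟩ : ∃ s : Fin ([3,4,1,2] : List ℕ).length, s.val = 1 :=
    ⟨⟨1, by norm_num⟩, rfl⟩
  obtain ⟨s2, hs2⟩ : ∃ s : Fin ([3,4,1,2] : List ℕ).length, s.val = 2 :=
    ⟨⟨2, by norm_num⟩, rfl⟩
  obtain ⟨s3, hs3⟩ : ∃ s : Fin ([3,4,1,2] : List ℕ).length, s.val = 3 :=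
    ⟨⟨3, by norm_num⟩, rfl⟩
  have m01 : f s0 < f s1 := hf (by rw [Fin.lt_def, hs0, hs1]; norm_num)
  have m02 : f s0 < f s2 := hf (by rw [Fin.lt_def, hs0, hs2]; norm_num)
  have m03 : f s0 < f s3 := hf (by rw [Fin.lt_def, hs0, hs3]; norm_num)
  have m12 : f s1 < f s2 := hf (by rw [Fin.lt_def, hs1, hs2]; norm_num)
  have m13 : f s1 < f s3 := hf (by rw [Fin.lt_def, hs1, hs3]; norm_num)
  have m23 : f s2 < f s3 := hf (by rw [Fin.lt_def, hs2, hs3]; norm_num)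
  have w01 := hiff s0 s1
  rw [get4, get4, hs0, hs1] at w01; norm_num at w01
  have w02 := hiff s0 s2
  rw [get4, get4, hs0, hs2] at w02; norm_num at w02
  have w03 := hiff s0 s3
  rw [get4, get4, hs0, hs3] at w03; norm_num at w03
  have w10 := hiff s1 s0
  rw [get4, get4, hs1, hs0] at w10; norm_num at w10
  have w12 := hiff s1 s2
  rw [get4, get4, hs1, hs2] at w12; norm_num at w12
  have w13 := hiff s1 s3
  rw [get4, get4, hs1, hs3] at w13; norm_num at w13
  have w20 := hiff s2 s0
  rw [get4, get4, hs2, hs0] at w20; norm_num at w20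
  have w21 := hiff s2 s1
  rw [get4, get4, hs2, hs1] at w21; norm_num at w21
  have w23 := hiff s2 s3
  rw [get4, get4, hs2, hs3] at w23; norm_num at w23
  have w30 := hiff s3 s0
  rw [get4, get4, hs3, hs0] at w30; norm_num at w30
  have w31 := hiff s3 s1
  rw [get4, get4, hs3, hs1] at w31; norm_num at w31
  have w32 := hiff s3 s2
  rw [get4, get4, hs3, hs2] at w32; norm_num at w32
  have hl01 := h.1 (f s0) (f s1) m01
  have hh01 := h.2 (f s0) (f s1) m01
  have hl02 := h.1 (f s0) (f s2) m02
  have hh02 := h.2 (f s0) (f s2) m02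
  have hl03 := h.1 (f s0) (f s3) m03
  have hh03 := h.2 (f s0) (f s3) m03
  have hl12 := h.1 (f s1) (f s2) m12
  have hh12 := h.2 (f s1) (f s2) m12
  have hl13 := h.1 (f s1) (f s3) m13
  have hh13 := h.2 (f s1) (f s3) m13
  have hl23 := h.1 (f s2) (f s3) m23
  have hh23 := h.2 (f s2) (f s3) m23
  simp only [S7.ordR_true, S7.ordR_false, List.get_eq_getElem] at *
  omega

lemma avoids_132_struct {l : List ℕ} {k : ℕ} (h : S7.Struct l k false true) :
    PAvoids l [1,3,2] := by
  rintro ⟨f, hf, hiff⟩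
  obtain ⟨s0, hs0⟩ : ∃ s : Fin ([1,3,2] : List ℕ).length, s.val = 0 :=
    ⟨⟨0, by norm_num⟩, rfl⟩
  obtain ⟨s1, hs1⟩ : ∃ s : Fin ([1,3,2] : List ℕ).length, s.val = 1 :=
    ⟨⟨1, by norm_num⟩, rfl⟩
  obtain ⟨s2, hs2⟩ : ∃ s : Fin ([1,3,2] : List ℕ).length, s.val = 2 :=
    ⟨⟨2, by norm_num⟩, rfl⟩
  have m01 : f s0 < f s1 := hf (by rw [Fin.lt_def, hs0, hs1]; norm_num)
  have m02 : f s0 < f s2 := hf (by rw [Fin.lt_def, hs0, hs2]; norm_num)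
  have m12 : f s1 < f s2 := hf (by rw [Fin.lt_def, hs1, hs2]; norm_num)
  have w01 := hiff s0 s1
  rw [get3, get3, hs0, hs1] at w01; norm_num at w01
  have w02 := hiff s0 s2
  rw [get3, get3, hs0, hs2] at w02; norm_num at w02
  have w10 := hiff s1 s0
  rw [get3, get3, hs1, hs0] at w10; norm_num at w10
  have w12 := hiff s1 s2
  rw [get3, get3, hs1, hs2] at w12; norm_num at w12
  have w20 := hiff s2 s0
  rw [get3, get3, hs2, hs0] at w20; norm_num at w20
  have w21 := hiff s2 s1
  rw [get3, get3, hs2, hs1] at w21; norm_num at w21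
  have hl01 := h.1 (f s0) (f s1) m01
  have hh01 := h.2 (f s0) (f s1) m01
  have hl02 := h.1 (f s0) (f s2) m02
  have hh02 := h.2 (f s0) (f s2) m02
  have hl12 := h.1 (f s1) (f s2) m12
  have hh12 := h.2 (f s1) (f s2) m12
  simp only [S7.ordR_true, S7.ordR_false, List.get_eq_getElem] at *
  omega

lemma avoids_312_struct {l : List ℕ} {k : ℕ} (h : S7.Struct l k false true) :
    PAvoids l [3,1,2] := by
  rintro ⟨f, hf, hiff⟩
  obtain ⟨s0, hs0⟩ : ∃ s : Fin ([3,1,2] : List ℕ).length, s.val = 0 :=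
    ⟨⟨0, by norm_num⟩, rfl⟩
  obtain ⟨s1, hs1⟩ : ∃ s : Fin ([3,1,2] : List ℕ).length, s.val = 1 :=
    ⟨⟨1, by norm_num⟩, rfl⟩
  obtain ⟨s2, hs2⟩ : ∃ s : Fin ([3,1,2] : List ℕ).length, s.val = 2 :=
    ⟨⟨2, by norm_num⟩, rfl⟩
  have m01 : f s0 < f s1 := hf (by rw [Fin.lt_def, hs0, hs1]; norm_num)
  have m02 : f s0 < f s2 := hf (by rw [Fin.lt_def, hs0, hs2]; norm_num)
  have m12 : f s1 < f s2 := hf (by rw [Fin.lt_def, hs1, hs2]; norm_num)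
  have w01 := hiff s0 s1
  rw [get3, get3, hs0, hs1] at w01; norm_num at w01
  have w02 := hiff s0 s2
  rw [get3, get3, hs0, hs2] at w02; norm_num at w02
  have w10 := hiff s1 s0
  rw [get3, get3, hs1, hs0] at w10; norm_num at w10
  have w12 := hiff s1 s2
  rw [get3, get3, hs1, hs2] at w12; norm_num at w12
  have w20 := hiff s2 s0
  rw [get3, get3, hs2, hs0] at w20; norm_num at w20
  have w21 := hiff s2 s1
  rw [get3, get3, hs2, hs1] at w21; norm_num at w21
  have hl01 := h.1 (f s0) (f s1) m01
  have hh01 := h.2 (f s0) (f s1) m01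
  have hl02 := h.1 (f s0) (f s2) m02
  have hh02 := h.2 (f s0) (f s2) m02
  have hl12 := h.1 (f s1) (f s2) m12
  have hh12 := h.2 (f s1) (f s2) m12
  simp only [S7.ordR_true, S7.ordR_false, List.get_eq_getElem] at *
  omega

lemma get_mem' (l : List ℕ) (s : Fin l.length) : l.get s ∈ l :=
  List.get_mem l s

/-! structure theorems -/

def TopAt (l : List ℕ) (i : Fin l.length) : Prop :=
  ∃ h : Fin l.length, h < i ∧ l.get h < l.get i

lemma ordR_not {e : Bool} {x y : ℕ} : ordR (!e) x y ↔ ordR e y x := by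
  cases e <;> rfl

lemma bottom_lt {l : List ℕ} (hnd : l.Nodup) {i j : Fin l.length} (hij : i < j)
    (hbot : ¬ TopAt l j) : l.get j < l.get i := by
  have h1 : ¬ l.get i < l.get j := fun hc => hbot ⟨i, hij, hc⟩
  have h2 : l.get i ≠ l.get j := fun he => (ne_of_lt hij) (hnd.get_inj_iff.mp he)
  omega

lemma tops_dec {l : List ℕ} (hnd : l.Nodup) (h123 : PAvoids l [1,2,3]) {i j : Fin l.length}
    (hij : i < j) (hti : TopAt l i) : l.get j < l.get i := by
  by_contra hc
  have hne : l.get i ≠ l.get j := fun he => (ne_of_lt hij) (hnd.get_inj_iff.mp he)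
  have hlt : l.get i < l.get j := by omega
  obtain ⟨h, hhi, hv⟩ := hti
  exact h123 (pcontains_123 hhi hij hv hlt)

lemma tops_inc {l : List ℕ} (hnd : l.Nodup) (h132 : PAvoids l [1,3,2])
    (h312 : PAvoids l [3,1,2]) {i j : Fin l.length}
    (hij : i < j) (htj : TopAt l j) : l.get i < l.get j := by
  by_contra hc
  have hne : l.get i ≠ l.get j := fun he => (ne_of_lt hij) (hnd.get_inj_iff.mp he)
  have hlt : l.get j < l.get i := by omega
  obtain ⟨h, hhj, hv⟩ := htj
  rcases lt_trichotomy h i with hhi | hhi | hhi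
  · exact h132 (pcontains_132 hhi hij hv hlt)
  · subst hhi; omega
  · exact h312 (pcontains_312 hhi hhj hv hlt)

lemma bot_lt_top_tau {l : List ℕ} (hnd : l.Nodup) (h132 : PAvoids l [1,3,2])
    (h312 : PAvoids l [3,1,2]) {i j : Fin l.length}
    (hbi : ¬ TopAt l i) (htj : TopAt l j) : l.get i < l.get j := by
  by_contra hc
  have hne : l.get i ≠ l.get j := by
    intro he
    have := hnd.get_inj_iff.mp he
    subst this
    exact hbi htj
  have hlt : l.get j < l.get i := by omega
  obtain ⟨h, hhj, hv⟩ := htj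
  rcases lt_trichotomy i j with hij | hij | hij
  · rcases lt_trichotomy h i with hhi | hhi | hhi
    · exact hbi ⟨h, hhi, by omega⟩
    · subst hhi; omega
    · exact h312 (pcontains_312 hhi hhj hv hlt)
  · subst hij; exact hbi ⟨h, hhj, hv⟩
  · have := bottom_lt hnd hij hbi
    omega

lemma high_dec_sigma {l : List ℕ} (hnd : l.Nodup) (h123 : PAvoids l [1,2,3])
    (h3142 : PAvoids l [3,1,4,2]) (h3412 : PAvoids l [3,4,1,2]) {t₀ : Fin l.length}
    (ht₀ : TopAt l t₀) (hmin : ∀ i : Fin l.length, TopAt l i → l.get t₀ ≤ l.get i)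
    {i j : Fin l.length} (hij : i < j) (hvi : l.get t₀ ≤ l.get i) (hvj : l.get t₀ ≤ l.get j) :
    l.get j < l.get i := by
  by_contra hc
  have hne : l.get i ≠ l.get j := fun he => (ne_of_lt hij) (hnd.get_inj_iff.mp he)
  have hlt : l.get i < l.get j := by omega
  by_cases htj : TopAt l j
  · by_cases hti : TopAt l i
    · exact absurd (tops_dec hnd h123 hij hti) (by omega)
    · -- i is a bottom with value ≥ get t₀, in fact >
      have hit0v : l.get t₀ < l.get i := by
        rcases eq_or_ne i t₀ with he | he
        · subst he; exact absurd ht₀ hti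
        · have : l.get i ≠ l.get t₀ := fun hcc => he (hnd.get_inj_iff.mp hcc)
          omega
      have ht₀' := ht₀
      obtain ⟨s₀, hs₀t₀, hv₀⟩ := ht₀'
      have his₀ : i < s₀ := by
        rcases lt_trichotomy s₀ i with hh | hh | hh
        · exact absurd (bottom_lt hnd hh hti) (by omega)
        · subst hh; omega
        · exact hh
      rcases lt_trichotomy t₀ j with htj' | htj' | htj'
      · exact absurd (tops_dec hnd h123 htj' ht₀) (by omega)
      · subst htj'; omega
      · rcases lt_trichotomy s₀ j with hsj | hsj | hsj
        · exact h3142 (pcontains_3142 his₀ hsj htj' hv₀ hit0v hlt)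
        · subst hsj; omega
        · exact h3412 (pcontains_3412 hij hsj hs₀t₀ hv₀ hit0v hlt)
  · exact absurd (bottom_lt hnd hij htj) (by omega)

lemma struct_of_sigma_avoid {l : List ℕ} (hp : IsPermList l) (h123 : PAvoids l [1,2,3])
    (h3142 : PAvoids l [3,1,4,2]) (h3412 : PAvoids l [3,4,1,2]) :
    ∃ k, Struct l k false false := by
  classical
  have hnd := isPermList_nodup hp
  by_cases hT : ∃ i, TopAt l i
  · obtain ⟨i₀, hi₀⟩ := hT
    obtain ⟨t₀, ht₀mem, hmin⟩ := Finset.exists_min_image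
      (Finset.univ.filter (fun i => TopAt l i)) (fun i => l.get i)
      ⟨i₀, by simp [hi₀]⟩
    simp only [Finset.mem_filter, Finset.mem_univ, true_and] at ht₀mem
    have hmin' : ∀ i : Fin l.length, TopAt l i → l.get t₀ ≤ l.get i := by
      intro i hi; exact hmin i (by simp [hi])
    have hpos : 1 ≤ l.get t₀ := (isPermList_length_mem hp (get_mem' l t₀)).1
    refine ⟨l.get t₀ - 1, ?_, ?_⟩
    · intro s t hst hs ht
      rw [ordR_false]
      refine bottom_lt hnd hst ?_
      intro htop
      have := hmin' t htop
      omega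
    · intro s t hst hs ht
      rw [ordR_false]
      exact high_dec_sigma hnd h123 h3142 h3412 ht₀mem hmin' hst (by omega) (by omega)
  · refine ⟨l.length, ?_, ?_⟩
    · intro s t hst hs ht
      rw [ordR_false]
      exact bottom_lt hnd hst (fun hc => hT ⟨t, hc⟩)
    · intro s t hst hs ht
      have := (isPermList_length_mem hp (get_mem' l s)).2
      omega

lemma struct_of_tau_avoid {l : List ℕ} (hp : IsPermList l) (h132 : PAvoids l [1,3,2])
    (h312 : PAvoids l [3,1,2]) :
    ∃ k, Struct l k false true := by
  classical
  have hnd := isPermList_nodup hp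
  by_cases hT : ∃ i, TopAt l i
  · obtain ⟨i₀, hi₀⟩ := hT
    obtain ⟨t₀, ht₀mem, hmin⟩ := Finset.exists_min_image
      (Finset.univ.filter (fun i => TopAt l i)) (fun i => l.get i)
      ⟨i₀, by simp [hi₀]⟩
    simp only [Finset.mem_filter, Finset.mem_univ, true_and] at ht₀mem
    have hmin' : ∀ i : Fin l.length, TopAt l i → l.get t₀ ≤ l.get i := by
      intro i hi; exact hmin i (by simp [hi])
    have hpos : 1 ≤ l.get t₀ := (isPermList_length_mem hp (get_mem' l t₀)).1
    refine ⟨l.get t₀ - 1, ?_, ?_⟩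
    · intro s t hst hs ht
      rw [ordR_false]
      refine bottom_lt hnd hst ?_
      intro htop
      have := hmin' t htop
      omega
    · intro s t hst hs ht
      rw [ordR_true]
      have hts : TopAt l s := by
        by_contra hbs
        have := bot_lt_top_tau hnd h132 h312 hbs ht₀mem
        omega
      have htt : TopAt l t := by
        by_contra hbt
        have := bot_lt_top_tau hnd h132 h312 hbt ht₀mem
        omega
      exact tops_inc hnd h132 h312 hst htt
  · refine ⟨l.length, ?_, ?_⟩
    · intro s t hst hs ht
      rw [ordR_false]
      exact bottom_lt hnd hst (fun hc => hT ⟨t, hc⟩)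
    · intro s t hst hs ht
      have := (isPermList_length_mem hp (get_mem' l s)).2
      omega

lemma struct_reverse {l : List ℕ} {k : ℕ} {e₁ e₂ : Bool} (h : Struct l k e₁ e₂) :
    Struct l.reverse k (!e₁) (!e₂) := by
  have hn : l.reverse.length = l.length := List.length_reverse
  have hne : ∀ s : Fin l.reverse.length, l.length - 1 - s.val < l.length := by
    intro s; have := s.isLt; omega
  constructor
  · intro s t hst hs ht
    rw [get_rev _ _ (hne s)] at hs ⊢
    rw [get_rev _ _ (hne t)] at ht ⊢
    rw [ordR_not]
    refine h.1 _ _ ?_ ht hs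
    simp only [Fin.mk_lt_mk]
    have h1 := t.isLt
    have h2 : s.val < t.val := hst
    omega
  · intro s t hst hs ht
    rw [get_rev _ _ (hne s)] at hs ⊢
    rw [get_rev _ _ (hne t)] at ht ⊢
    rw [ordR_not]
    refine h.2 _ _ ?_ ht hs
    simp only [Fin.mk_lt_mk]
    have h1 := t.isLt
    have h2 : s.val < t.val := hst
    omega

lemma pavoids_of_reverse {l : List ℕ} {p q : List ℕ} (hq : p.reverse = q)
    (h : PAvoids l q) : PAvoids l.reverse p := by
  intro hc
  have := pcontains_reverse hc
  rw [List.reverse_reverse, hq] at this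
  exact h this

lemma struct_of_revsigma_avoid {l : List ℕ} (hp : IsPermList l) (h321 : PAvoids l [3,2,1])
    (h2143 : PAvoids l [2,1,4,3]) (h2413 : PAvoids l [2,4,1,3]) :
    ∃ k, Struct l k true true := by
  have r123 : PAvoids l.reverse [1,2,3] := pavoids_of_reverse (by rfl) h321
  have r3142 : PAvoids l.reverse [3,1,4,2] := pavoids_of_reverse (by rfl) h2413
  have r3412 : PAvoids l.reverse [3,4,1,2] := pavoids_of_reverse (by rfl) h2143
  obtain ⟨k, hk⟩ := struct_of_sigma_avoid (isPermList_reverse hp) r123 r3142 r3412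
  refine ⟨k, ?_⟩
  have := struct_reverse hk
  rwa [List.reverse_reverse] at this

lemma struct_of_revtau_avoid {l : List ℕ} (hp : IsPermList l) (h213 : PAvoids l [2,1,3])
    (h231 : PAvoids l [2,3,1]) :
    ∃ k, Struct l k true false := by
  have r132 : PAvoids l.reverse [1,3,2] := pavoids_of_reverse (by rfl) h231
  have r312 : PAvoids l.reverse [3,1,2] := pavoids_of_reverse (by rfl) h213
  obtain ⟨k, hk⟩ := struct_of_tau_avoid (isPermList_reverse hp) r132 r312
  refine ⟨k, ?_⟩
  have := struct_reverse hk
  rwa [List.reverse_reverse] at this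

/-! sigma and tau facts -/

lemma sigma_length (m : ℕ) : (sigmaAlt m).length = 2*m := by simp [sigmaAlt]

lemma sigma_get (m : ℕ) (j : Fin (sigmaAlt m).length) :
    (sigmaAlt m).get j = if j.val % 2 = 0 then m - j.val/2 else 2*m - j.val/2 := by
  rcases j with ⟨jv, hj⟩
  rw [sigma_length] at hj
  simp [sigmaAlt, List.get_eq_getElem]

lemma mem_incr_iff {N x : ℕ} : x ∈ (List.range N).map (· + 1) ↔ 1 ≤ x ∧ x ≤ N := by
  simp only [List.mem_map, List.mem_range]
  constructor
  · rintro ⟨y, hy, rfl⟩; omega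
  · intro h; exact ⟨x - 1, by omega, by omega⟩

lemma isPermList_sigma (m : ℕ) : IsPermList (sigmaAlt m) := by
  unfold IsPermList
  rw [sigma_length]
  have hnd : (sigmaAlt m).Nodup := by
    refine List.Nodup.map_on ?_ List.nodup_range
    intro x hx y hy hxy
    simp only [List.mem_range] at hx hy
    split_ifs at hxy <;> omega
  have hsub : sigmaAlt m ⊆ (List.range (2*m)).map (· + 1) := by
    intro x hx
    simp only [sigmaAlt, List.mem_map, List.mem_range] at hx
    obtain ⟨j, hj, hv⟩ := hx
    rw [mem_incr_iff]
    split_ifs at hv <;> omega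
  refine (hnd.subperm hsub).perm_of_length_le ?_
  rw [sigma_length]
  simp

lemma va_sigma (m : ℕ) : VerticalAlternation (sigmaAlt m) := by
  left
  intro s t hs ht
  have hL := sigma_length m
  have hsl : s.val < 2*m := by have := s.isLt; omega
  have htl : t.val < 2*m := by have := t.isLt; omega
  rw [sigma_get, sigma_get, if_pos ht, if_neg (by omega)]
  omega

lemma struct_sigma (m : ℕ) : Struct (sigmaAlt m) m false false := by
  constructor <;>
  · intro s t hst hs ht
    have hL := sigma_length m
    have hsl : s.val < 2*m := by have := s.isLt; omega
    have htl : t.val < 2*m := by have := t.isLt; omega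
    have hst' : s.val < t.val := hst
    rw [sigma_get] at hs ht
    rw [ordR_false, sigma_get, sigma_get]
    split_ifs at hs ht ⊢ <;> omega

lemma tau_length (m : ℕ) : (tauAlt m).length = 2*m := by simp [tauAlt]

lemma tau_get (m : ℕ) (j : Fin (tauAlt m).length) :
    (tauAlt m).get j = if j.val % 2 = 0 then m + j.val/2 + 1 else m - j.val/2 := by
  rcases j with ⟨jv, hj⟩
  rw [tau_length] at hj
  simp [tauAlt, List.get_eq_getElem]

lemma isPermList_tau (m : ℕ) : IsPermList (tauAlt m) := by
  unfold IsPermList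
  rw [tau_length]
  have hnd : (tauAlt m).Nodup := by
    refine List.Nodup.map_on ?_ List.nodup_range
    intro x hx y hy hxy
    simp only [List.mem_range] at hx hy
    split_ifs at hxy <;> omega
  have hsub : tauAlt m ⊆ (List.range (2*m)).map (· + 1) := by
    intro x hx
    simp only [tauAlt, List.mem_map, List.mem_range] at hx
    obtain ⟨j, hj, hv⟩ := hx
    rw [mem_incr_iff]
    split_ifs at hv <;> omega
  refine (hnd.subperm hsub).perm_of_length_le ?_
  rw [tau_length]
  simp

lemma va_tau (m : ℕ) : VerticalAlternation (tauAlt m) := by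
  right
  intro s t hs ht
  have hL := tau_length m
  have hsl : s.val < 2*m := by have := s.isLt; omega
  have htl : t.val < 2*m := by have := t.isLt; omega
  rw [tau_get, tau_get, if_pos ht, if_neg (by omega)]
  omega

lemma struct_tau (m : ℕ) : Struct (tauAlt m) m false true := by
  constructor <;>
  · intro s t hst hs ht
    have hL := tau_length m
    have hsl : s.val < 2*m := by have := s.isLt; omega
    have htl : t.val < 2*m := by have := t.isLt; omega
    have hst' : s.val < t.val := hst
    rw [tau_get] at hs ht
    first
      | rw [ordR_false, tau_get, tau_get]
      | rw [ordR_true, tau_get, tau_get]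
    split_ifs at hs ht ⊢ <;> omega

lemma va_reverse_even {l : List ℕ} (hn : l.length % 2 = 0) (h : VerticalAlternation l) :
    VerticalAlternation l.reverse := by
  have hlen : l.reverse.length = l.length := List.length_reverse
  have hne : ∀ s : Fin l.reverse.length, l.length - 1 - s.val < l.length := by
    intro s; have := s.isLt; omega
  rcases h with h | h
  · right
    intro s t hs ht
    rw [get_rev _ _ (hne s), get_rev _ _ (hne t)]
    have hsl := s.isLt; have htl := t.isLt
    exact h ⟨l.length - 1 - t.val, hne t⟩ ⟨l.length - 1 - s.val, hne s⟩
      (show (l.length - 1 - t.val) % 2 = 1 by omega)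
      (show (l.length - 1 - s.val) % 2 = 0 by omega)
  · left
    intro s t hs ht
    rw [get_rev _ _ (hne s), get_rev _ _ (hne t)]
    have hsl := s.isLt; have htl := t.isLt
    exact h ⟨l.length - 1 - t.val, hne t⟩ ⟨l.length - 1 - s.val, hne s⟩
      (show (l.length - 1 - t.val) % 2 = 1 by omega)
      (show (l.length - 1 - s.val) % 2 = 0 by omega)

/-- reversed families -/
def sigmaR (m : ℕ) : List ℕ := (sigmaAlt m).reverse

def tauR (m : ℕ) : List ℕ := (tauAlt m).reverse

lemma sigmaR_length (m : ℕ) : (sigmaR m).length = 2*m := by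
  simp [sigmaR, sigma_length]

lemma tauR_length (m : ℕ) : (tauR m).length = 2*m := by
  simp [tauR, tau_length]

lemma isPermList_sigmaR (m : ℕ) : IsPermList (sigmaR m) :=
  isPermList_reverse (isPermList_sigma m)

lemma isPermList_tauR (m : ℕ) : IsPermList (tauR m) :=
  isPermList_reverse (isPermList_tau m)

lemma va_sigmaR (m : ℕ) : VerticalAlternation (sigmaR m) :=
  va_reverse_even (by rw [sigma_length]; omega) (va_sigma m)

lemma va_tauR (m : ℕ) : VerticalAlternation (tauR m) :=
  va_reverse_even (by rw [tau_length]; omega) (va_tau m)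

lemma sigma_avoids (m : ℕ) :
    PAvoids (sigmaAlt m) [1,2,3] ∧ PAvoids (sigmaAlt m) [3,1,4,2] ∧
      PAvoids (sigmaAlt m) [3,4,1,2] :=
  ⟨avoids_123_struct (struct_sigma m), avoids_3142_struct (struct_sigma m),
    avoids_3412_struct (struct_sigma m)⟩

lemma tau_avoids (m : ℕ) :
    PAvoids (tauAlt m) [1,3,2] ∧ PAvoids (tauAlt m) [3,1,2] :=
  ⟨avoids_132_struct (struct_tau m), avoids_312_struct (struct_tau m)⟩

lemma sigmaR_avoids (m : ℕ) :
    PAvoids (sigmaR m) [3,2,1] ∧ PAvoids (sigmaR m) [2,1,4,3] ∧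
      PAvoids (sigmaR m) [2,4,1,3] :=
  ⟨pavoids_of_reverse (by rfl) (sigma_avoids m).1,
   pavoids_of_reverse (by rfl) (sigma_avoids m).2.2,
   pavoids_of_reverse (by rfl) (sigma_avoids m).2.1⟩

lemma tauR_avoids (m : ℕ) :
    PAvoids (tauR m) [2,1,3] ∧ PAvoids (tauR m) [2,3,1] :=
  ⟨pavoids_of_reverse (by rfl) (tau_avoids m).2,
   pavoids_of_reverse (by rfl) (tau_avoids m).1⟩

section ES
open Function Finset
variable {α : Type*} [LinearOrder α]

theorem erdos_szekeres {r s n : ℕ} {f : Fin n → α} (hn : r * s < n) (hf : Injective f) :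
    (∃ t : Finset (Fin n), r < #t ∧ StrictMonoOn f ↑t) ∨
      ∃ t : Finset (Fin n), s < #t ∧ StrictAntiOn f ↑t := by
  -- Given an index `i`, produce the set of increasing (resp., decreasing) subsequences which ends
  -- at `i`.
  let inc_sequences_ending_in : Fin n → Finset (Finset (Fin n)) := fun i =>
    univ.powerset.filter fun t => Finset.max t = i ∧ StrictMonoOn f ↑t
  let dec_sequences_ending_in : Fin n → Finset (Finset (Fin n)) := fun i =>
    univ.powerset.filter fun t => Finset.max t = i ∧ StrictAntiOn f ↑t
  -- The singleton sequence is in both of the above collections.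
  -- (This is useful to show that the maximum length subsequence is at least 1, and that the set
  -- of subsequences is nonempty.)
  have inc_i : ∀ i, {i} ∈ inc_sequences_ending_in i := fun i => by
    simp [inc_sequences_ending_in, StrictMonoOn]
  have dec_i : ∀ i, {i} ∈ dec_sequences_ending_in i := fun i => by
    simp [dec_sequences_ending_in, StrictAntiOn]
  -- Define the pair of labels: at index `i`, the pair is the maximum length of an increasing
  -- subsequence ending at `i`, paired with the maximum length of a decreasing subsequence ending
  -- at `i`.
  -- We call these labels `(a_i, b_i)`.
  let ab' : Fin n → ℕ × ℕ := by
    intro i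
    apply
      (max' ((inc_sequences_ending_in i).image card) (Nonempty.image ⟨{i}, inc_i i⟩ _),
        max' ((dec_sequences_ending_in i).image card) (Nonempty.image ⟨{i}, dec_i i⟩ _))
  -- Porting note: it costs many resources to unfold `ab'` so we obscure the definition:
  generalize hab : ab' = ab
  -- It now suffices to show that one of the labels is 'big' somewhere. In particular, if the
  -- first in the pair is more than `r` somewhere, then we have an increasing subsequence in our
  -- set, and if the second is more than `s` somewhere, then we have a decreasing subsequence.
  rsuffices ⟨i, hi⟩ : ∃ i, r < (ab i).1 ∨ s < (ab i).2
  · refine Or.imp ?_ ?_ hi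
    on_goal 1 =>
      have : (ab i).1 ∈ image card (inc_sequences_ending_in i) := by
        simp only [← hab]; exact max'_mem _ (Nonempty.image ⟨{i}, inc_i i⟩ _)
    on_goal 2 =>
      have : (ab i).2 ∈ image card (dec_sequences_ending_in i) := by
        simp only [← hab]; exact max'_mem _ (Nonempty.image ⟨{i}, dec_i i⟩ _)
    all_goals
      intro hi
      rw [mem_image] at this
      obtain ⟨t, ht₁, ht₂⟩ := this
      refine ⟨t, by rwa [ht₂], ?_⟩
      rw [mem_filter] at ht₁
      apply ht₁.2.2
  -- Show first that the pair of labels is unique.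
  have : Injective ab := by
    simp only [← hab]
    apply Injective.of_lt_imp_ne
    intro i j k q
    injection q with q₁ q₂
    -- We have two cases: `f i < f j` or `f j < f i`.
    -- In the former we'll show `a_i < a_j`, and in the latter we'll show `b_i < b_j`.
    cases lt_or_gt_of_ne fun _ => ne_of_lt ‹i < j› (hf ‹f i = f j›)
    on_goal 1 =>
      apply ne_of_lt _ q₁
      have : (ab' i).1 ∈ image card (inc_sequences_ending_in i) := by exact max'_mem _ (Nonempty.image ⟨{i}, inc_i i⟩ _)
    on_goal 2 =>
      apply ne_of_lt _ q₂
      have : (ab' i).2 ∈ image card (dec_sequences_ending_in i) := by exact max'_mem _ (Nonempty.image ⟨{i}, dec_i i⟩ _)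
    all_goals
      -- Reduce to showing there is a subsequence of length `a_i + 1` which ends at `j`.
      rw [Nat.lt_iff_add_one_le]
      apply le_max'
      rw [mem_image] at this ⊢
      -- In particular we take the subsequence `t` of length `a_i` which ends at `i`, by definition
      -- of `a_i`
      rcases this with ⟨t, ht₁, ht₂⟩
      rw [mem_filter] at ht₁
      -- Ensure `t` ends at `i`.
      have : t.max = i := by simp only [ht₁.2.1]
      -- Now our new subsequence is given by adding `j` at the end of `t`.
      refine ⟨insert j t, ?_, ?_⟩
      -- First make sure it's valid, i.e., that this subsequence ends at `j` and is increasing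
      · rw [mem_filter]
        refine ⟨?_, ?_, ?_⟩
        · rw [mem_powerset]; apply subset_univ
        -- It ends at `j` since `i < j`.
        · convert max_insert (a := j) (s := t)
          rw [ht₁.2.1, max_eq_left]
          apply WithBot.coe_le_coe.mpr (le_of_lt ‹i < j›)
        -- To show it's increasing (i.e., `f` is monotone increasing on `t.insert j`), we do cases
        -- on what the possibilities could be - either in `t` or equals `j`.
        simp only [StrictMonoOn, StrictAntiOn, coe_insert, Set.mem_insert_iff, mem_coe]
        -- Most of the cases are just bashes.
        rintro x ⟨rfl | _⟩ y ⟨rfl | _⟩ _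
        · apply (irrefl _ ‹j < j›).elim
        · exfalso
          apply not_le_of_gt (_root_.trans ‹i < j› ‹j < y›) (le_max_of_eq ‹y ∈ t› ‹t.max = i›)
        · first
          | apply lt_of_le_of_lt _ ‹f i < f j›
          | apply lt_of_lt_of_le ‹f j < f i› _
          rcases lt_or_eq_of_le (le_max_of_eq ‹x ∈ t› ‹t.max = i›) with (_ | rfl)
          · apply le_of_lt (ht₁.2.2 ‹x ∈ t› (mem_of_max ‹t.max = i›) ‹x < i›)
          · rfl
        · apply ht₁.2.2 ‹x ∈ t› ‹y ∈ t› ‹x < y›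
      -- Finally show that this new subsequence is one longer than the old one.
      · rw [card_insert_of_notMem, ht₂]
        intro
        apply not_le_of_gt ‹i < j› (le_max_of_eq ‹j ∈ t› ‹t.max = i›)
  -- Finished both goals!
  -- Now that we have uniqueness of each label, it remains to do some counting to finish off.
  -- Suppose all the labels are small.
  by_contra! q
  -- Then the labels `(a_i, b_i)` all fit in the following set: `{ (x,y) | 1 ≤ x ≤ r, 1 ≤ y ≤ s }`
  let ran : Finset (ℕ × ℕ) := (range r).image Nat.succ ×ˢ (range s).image Nat.succ
  -- which we prove here.
  have : image ab univ ⊆ ran := by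
    -- First some logical shuffling
    rintro ⟨x₁, x₂⟩
    simp only [ran, mem_image, exists_prop, mem_range, mem_univ, mem_product, true_and,
      Prod.ext_iff]
    rintro ⟨i, rfl, rfl⟩
    specialize q i
    -- Show `1 ≤ a_i` and `1 ≤ b_i`, which is easy from the fact that `{i}` is an increasing and
    -- decreasing subsequence which we did right near the top.
    have z : 1 ≤ (ab i).1 ∧ 1 ≤ (ab i).2 := by
      simp only [← hab]
      constructor <;>
        · apply le_max'
          rw [mem_image]
          exact ⟨{i}, by solve_by_elim, card_singleton i⟩
    -- Need to get `a_i ≤ r`, here phrased as: there is some `a < r` with `a+1 = a_i`.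
    exact ⟨⟨(ab i).1 - 1, by omega⟩, (ab i).2 - 1, by omega⟩
  -- To get our contradiction, it suffices to prove `n ≤ r * s`
  apply not_le_of_gt hn
  -- Which follows from considering the cardinalities of the subset above, since `ab` is injective.
  simpa [ran, Nat.succ_injective, card_image_of_injective, ‹Injective ab›] using card_le_card this


end ES

/-! skeleton machinery -/

def Skeleton (l : List ℕ) (M : ℕ) (e₁ e₂ : Bool) (g : Fin M → Fin l.length) : Prop :=
  StrictMono g ∧
  (∀ i j : Fin M, i.val % 2 = 0 → j.val % 2 = 1 → l.get (g i) < l.get (g j)) ∧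
  (∀ i j : Fin M, i < j → i.val % 2 = 0 → j.val % 2 = 0 → ordR e₁ (l.get (g i)) (l.get (g j))) ∧
  (∀ i j : Fin M, i < j → i.val % 2 = 1 → j.val % 2 = 1 → ordR e₂ (l.get (g i)) (l.get (g j)))

lemma contains_of_skeleton {π β : List ℕ} {L k : ℕ} {e₁ e₂ : Bool}
    {g : Fin (2*L) → Fin π.length} (hsk : Skeleton π (2*L) e₁ e₂ g)
    (hst : Struct β k e₁ e₂) (hlen : β.length ≤ L) : PContains π β := by
  obtain ⟨hmono, hcross, hlow, hhigh⟩ := hsk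
  have hidx : ∀ s : Fin β.length, 2*s.val + (if β.get s ≤ k then 0 else 1) < 2*L := by
    intro s
    have := s.isLt
    split_ifs <;> omega
  set F : Fin β.length → Fin (2*L) :=
    fun s => ⟨2*s.val + (if β.get s ≤ k then 0 else 1), hidx s⟩ with hF
  have hFval : ∀ s, (F s).val = 2*s.val + (if β.get s ≤ k then 0 else 1) := fun s => rfl
  refine ⟨fun s => g (F s), ?_, ?_⟩
  · intro s t hstt
    apply hmono
    rw [Fin.lt_def, hFval, hFval]
    have h1 : s.val < t.val := hstt
    split_ifs <;> omega
  · intro s t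
    show π.get (g (F s)) < π.get (g (F t)) ↔ β.get s < β.get t
    by_cases hs : β.get s ≤ k <;> by_cases ht : β.get t ≤ k
    · -- both low
      rcases lt_trichotomy s t with h | h | h
      · have h1 := hlow (F s) (F t) (by
            rw [Fin.lt_def, hFval, hFval, if_pos hs, if_pos ht]
            have : s.val < t.val := h
            omega)
          (by rw [hFval, if_pos hs]; omega) (by rw [hFval, if_pos ht]; omega)
        have h2 := hst.1 s t h hs ht
        cases e₁ <;> simp only [ordR_true, ordR_false] at h1 h2 <;> omega
      · subst h; omega
      · have h1 := hlow (F t) (F s) (by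
            rw [Fin.lt_def, hFval, hFval, if_pos hs, if_pos ht]
            have : t.val < s.val := h
            omega)
          (by rw [hFval, if_pos ht]; omega) (by rw [hFval, if_pos hs]; omega)
        have h2 := hst.1 t s h ht hs
        cases e₁ <;> simp only [ordR_true, ordR_false] at h1 h2 <;> omega
    · -- s low t high
      have h1 := hcross (F s) (F t) (by rw [hFval, if_pos hs]; omega)
        (by rw [hFval, if_neg ht]; omega)
      omega
    · -- s high t low
      have h1 := hcross (F t) (F s) (by rw [hFval, if_pos ht]; omega)
        (by rw [hFval, if_neg hs]; omega)
      omega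
    · -- both high
      rcases lt_trichotomy s t with h | h | h
      · have h1 := hhigh (F s) (F t) (by
            rw [Fin.lt_def, hFval, hFval, if_neg hs, if_neg ht]
            have : s.val < t.val := h
            omega)
          (by rw [hFval, if_neg hs]; omega) (by rw [hFval, if_neg ht]; omega)
        have h2 := hst.2 s t h (by omega) (by omega)
        cases e₂ <;> simp only [ordR_true, ordR_false] at h1 h2 <;> omega
      · subst h; omega
      · have h1 := hhigh (F t) (F s) (by
            rw [Fin.lt_def, hFval, hFval, if_neg hs, if_neg ht]
            have : t.val < s.val := h
            omega)
          (by rw [hFval, if_neg ht]; omega) (by rw [hFval, if_neg hs]; omega)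
        have h2 := hst.2 t s h (by omega) (by omega)
        cases e₂ <;> simp only [ordR_true, ordR_false] at h1 h2 <;> omega

lemma mono_subseq {K R : ℕ} (f : Fin K → ℕ) (hinj : Function.Injective f) (hK : R*R < K) :
    ∃ (e : Bool) (q : Fin R → Fin K), StrictMono q ∧
      ∀ x y : Fin R, x < y → ordR e (f (q x)) (f (q y)) := by
  rcases erdos_szekeres (r := R) (s := R) hK hinj with ⟨t, ht, hmono⟩ | ⟨t, ht, hanti⟩
  · refine ⟨true, fun x => t.orderEmbOfCardLe (le_of_lt ht) x,
      fun x y hxy => (t.orderEmbOfCardLe (le_of_lt ht)).strictMono hxy, ?_⟩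
    intro x y hxy
    rw [ordR_true]
    exact hmono (Finset.orderEmbOfCardLe_mem _ _ _) (Finset.orderEmbOfCardLe_mem _ _ _)
      ((t.orderEmbOfCardLe (le_of_lt ht)).strictMono hxy)
  · refine ⟨false, fun x => t.orderEmbOfCardLe (le_of_lt ht) x,
      fun x y hxy => (t.orderEmbOfCardLe (le_of_lt ht)).strictMono hxy, ?_⟩
    intro x y hxy
    rw [ordR_false]
    exact hanti (Finset.orderEmbOfCardLe_mem _ _ _) (Finset.orderEmbOfCardLe_mem _ _ _)
      ((t.orderEmbOfCardLe (le_of_lt ht)).strictMono hxy)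

/-- bound needed for skeleton extraction -/
def NB (L : ℕ) : ℕ := 2*(((L*L+1)*(L*L+1)+1)*1+1)+1

lemma skeleton_of_long {π : List ℕ} (hp : IsPermList π) (hva : VerticalAlternation π)
    (L : ℕ) (hlen : 2*((L*L+1)*(L*L+1)+1)+1 ≤ π.length) :
    ∃ (e₁ e₂ : Bool) (g : Fin (2*L) → Fin π.length), Skeleton π (2*L) e₁ e₂ g := by
  have hnd := isPermList_nodup hp
  set n := π.length with hn
  set R := L*L+1 with hR
  set K := R*R+1 with hK
  -- the "low" parity b
  obtain ⟨b, hb1, hb2⟩ : ∃ b, b ≤ 1 ∧ ∀ u v : Fin π.length,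
      u.val % 2 = b → v.val % 2 = 1 - b → π.get u < π.get v := by
    rcases hva with h | h
    · exact ⟨0, by omega, fun u v hu hv => h v u (by omega) hu⟩
    · exact ⟨1, by omega, fun u v hu hv => h u v hu (by omega)⟩
  have hKn : 2*K + 1 ≤ n := hlen
  -- first ES on the lows
  have hf1idx : ∀ a : Fin K, 2*a.val + b < n := by intro a; have := a.isLt; omega
  set f₁ : Fin K → ℕ := fun a => π.get ⟨2*a.val + b, hf1idx a⟩ with hf₁
  have hinj1 : Function.Injective f₁ := by
    intro a a' he
    have := hnd.get_inj_iff.mp he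
    rw [Fin.mk.injEq] at this
    exact Fin.ext (by omega)
  obtain ⟨e₁, q, hq, hqv⟩ := mono_subseq (R := R) f₁ hinj1 (by omega)
  -- second ES on the highs adjacent to the chosen lows
  have hf2idx : ∀ x : Fin R, 2*(q x).val + b + 1 < n := by
    intro x; have := (q x).isLt; omega
  set f₂ : Fin R → ℕ := fun x => π.get ⟨2*(q x).val + b + 1, hf2idx x⟩ with hf₂
  have hinj2 : Function.Injective f₂ := by
    intro x x' he
    have := hnd.get_inj_iff.mp he
    rw [Fin.mk.injEq] at this
    have : (q x).val = (q x').val := by omega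
    exact hq.injective (Fin.ext this)
  obtain ⟨e₂, i, hi, hiv⟩ := mono_subseq (R := L) f₂ hinj2 (by omega)
  -- assemble the skeleton
  have hhalf : ∀ x : Fin (2*L), x.val / 2 < L := by intro x; have := x.isLt; omega
  set X : Fin (2*L) → Fin R := fun x => i ⟨x.val / 2, hhalf x⟩ with hX
  have hgidx : ∀ x : Fin (2*L), 2*(q (X x)).val + b + x.val % 2 < n := by
    intro x; have := (q (X x)).isLt; omega
  set g : Fin (2*L) → Fin π.length := fun x => ⟨2*(q (X x)).val + b + x.val % 2, hgidx x⟩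
    with hg
  have hgval : ∀ x, (g x).val = 2*(q (X x)).val + b + x.val % 2 := fun x => rfl
  have hXmono : ∀ x y : Fin (2*L), x.val/2 < y.val/2 → (q (X x)).val < (q (X y)).val := by
    intro x y hxy
    exact hq (hi (show (⟨x.val/2, hhalf x⟩ : Fin L) < ⟨y.val/2, hhalf y⟩ from hxy))
  have hXeq : ∀ x y : Fin (2*L), x.val/2 = y.val/2 → X x = X y := by
    intro x y hxy
    simp only [hX]
    congr 1
    exact Fin.ext hxy
  refine ⟨e₁, e₂, g, ?_, ?_, ?_, ?_⟩
  · intro x y hxy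
    have hxy' : x.val < y.val := hxy
    rw [Fin.lt_def, hgval, hgval]
    rcases Nat.lt_or_ge (x.val/2) (y.val/2) with h | h
    · have := hXmono x y h
      omega
    · have heq : x.val/2 = y.val/2 := by omega
      rw [hXeq x y heq]
      omega
  · intro x y hx hy
    exact hb2 (g x) (g y) (by rw [hgval]; omega) (by rw [hgval]; omega)
  · intro x y hxy hx hy
    have hxy' : x.val < y.val := hxy
    have hdiv : x.val/2 < y.val/2 := by omega
    have h1 := hqv (X x) (X y) (hi (show (⟨x.val/2, hhalf x⟩ : Fin L) < ⟨y.val/2, hhalf y⟩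
      from hdiv))
    have e1 : π.get (g x) = f₁ (q (X x)) := by
      apply congrArg
      apply Fin.ext
      show (g x).val = 2*(q (X x)).val + b
      rw [hgval]
      omega
    have e2 : π.get (g y) = f₁ (q (X y)) := by
      apply congrArg
      apply Fin.ext
      show (g y).val = 2*(q (X y)).val + b
      rw [hgval]
      omega
    rw [e1, e2]
    exact h1
  · intro x y hxy hx hy
    have hxy' : x.val < y.val := hxy
    have hdiv : x.val/2 < y.val/2 := by omega
    have h1 := hiv ⟨x.val/2, hhalf x⟩ ⟨y.val/2, hhalf y⟩ hdiv
    have e1 : π.get (g x) = f₂ (X x) := by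
      apply congrArg
      apply Fin.ext
      show (g x).val = 2*(q (X x)).val + b + 1
      rw [hgval]
      omega
    have e2 : π.get (g y) = f₂ (X y) := by
      apply congrArg
      apply Fin.ext
      show (g y).val = 2*(q (X y)).val + b + 1
      rw [hgval]
      omega
    rw [e1, e2]
    exact h1

/-! finiteness and main theorem ingredients -/

lemma finite_short (N : ℕ) : {l : List ℕ | IsPermList l ∧ l.length ≤ N}.Finite := by
  have h : {l : List ℕ | IsPermList l ∧ l.length ≤ N} ⊆
      ⋃ n ∈ Set.Iic N, {l : List ℕ | l ∈ ((List.range n).map (· + 1)).permutations} := by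
    rintro l ⟨hp, hlen⟩
    exact Set.mem_biUnion (show l.length ∈ Set.Iic N from hlen) (List.mem_permutations.mpr hp)
  exact Set.Finite.subset (Set.Finite.biUnion (Set.finite_Iic N)
    (fun n _ => List.finite_toSet _)) h

lemma infinite_of_family {S : Set (List ℕ)} {F : ℕ → List ℕ}
    (hlen : ∀ m, (F m).length = 2*m) (hmem : ∀ m, F m ∈ S) : S.Infinite :=
  Set.infinite_of_injective_forall_mem (f := F)
    (fun a b hab => by
      have h1 := hlen a
      rw [hab, hlen b] at h1
      omega) hmem

end S7


/-- `Av(B)` contains only finitely many vertical alternations iff `B`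
contains a member of each of `Av(123,3142,3412)`, `Av(132,312)`, `Av(321,2143,2413)` and
`Av(213,231)`. -/
theorem stmt7 (B : Set (List ℕ)) (hBfin : B.Finite) (hB : ∀ β ∈ B, IsPermList β) :
    {π ∈ Av B | VerticalAlternation π}.Finite ↔
      ((∃ β ∈ B, PAvoids β [1,2,3] ∧ PAvoids β [3,1,4,2] ∧ PAvoids β [3,4,1,2]) ∧
       (∃ β ∈ B, PAvoids β [1,3,2] ∧ PAvoids β [3,1,2]) ∧
       (∃ β ∈ B, PAvoids β [3,2,1] ∧ PAvoids β [2,1,4,3] ∧ PAvoids β [2,4,1,3]) ∧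
       (∃ β ∈ B, PAvoids β [2,1,3] ∧ PAvoids β [2,3,1])) := by
  constructor
  · intro hfin
    by_contra hR
    rcases not_and_or.mp hR with h | hR2
    · refine (S7.infinite_of_family S7.sigma_length (fun m => ?_)) hfin
      refine ⟨⟨S7.isPermList_sigma m, ?_⟩, S7.va_sigma m⟩
      intro β hβ hcon
      have hb : ¬(PAvoids β [1,2,3] ∧ PAvoids β [3,1,4,2] ∧ PAvoids β [3,4,1,2]) :=
        fun hP => h ⟨β, hβ, hP⟩
      have hor : PContains β [1,2,3] ∨ PContains β [3,1,4,2] ∨ PContains β [3,4,1,2] := by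
        by_contra hc
        push_neg at hc
        exact hb ⟨hc.1, hc.2.1, hc.2.2⟩
      rcases hor with h' | h' | h'
      · exact (S7.sigma_avoids m).1 (S7.pcontains_trans hcon h')
      · exact (S7.sigma_avoids m).2.1 (S7.pcontains_trans hcon h')
      · exact (S7.sigma_avoids m).2.2 (S7.pcontains_trans hcon h')
    rcases not_and_or.mp hR2 with h | hR3
    · refine (S7.infinite_of_family S7.tau_length (fun m => ?_)) hfin
      refine ⟨⟨S7.isPermList_tau m, ?_⟩, S7.va_tau m⟩
      intro β hβ hcon
      have hb : ¬(PAvoids β [1,3,2] ∧ PAvoids β [3,1,2]) := fun hP => h ⟨β, hβ, hP⟩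
      have hor : PContains β [1,3,2] ∨ PContains β [3,1,2] := by
        by_contra hc
        push_neg at hc
        exact hb ⟨hc.1, hc.2⟩
      rcases hor with h' | h'
      · exact (S7.tau_avoids m).1 (S7.pcontains_trans hcon h')
      · exact (S7.tau_avoids m).2 (S7.pcontains_trans hcon h')
    rcases not_and_or.mp hR3 with h | h
    · refine (S7.infinite_of_family S7.sigmaR_length (fun m => ?_)) hfin
      refine ⟨⟨S7.isPermList_sigmaR m, ?_⟩, S7.va_sigmaR m⟩
      intro β hβ hcon
      have hb : ¬(PAvoids β [3,2,1] ∧ PAvoids β [2,1,4,3] ∧ PAvoids β [2,4,1,3]) :=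
        fun hP => h ⟨β, hβ, hP⟩
      have hor : PContains β [3,2,1] ∨ PContains β [2,1,4,3] ∨ PContains β [2,4,1,3] := by
        by_contra hc
        push_neg at hc
        exact hb ⟨hc.1, hc.2.1, hc.2.2⟩
      rcases hor with h' | h' | h'
      · exact (S7.sigmaR_avoids m).1 (S7.pcontains_trans hcon h')
      · exact (S7.sigmaR_avoids m).2.1 (S7.pcontains_trans hcon h')
      · exact (S7.sigmaR_avoids m).2.2 (S7.pcontains_trans hcon h')
    · refine (S7.infinite_of_family S7.tauR_length (fun m => ?_)) hfin
      refine ⟨⟨S7.isPermList_tauR m, ?_⟩, S7.va_tauR m⟩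
      intro β hβ hcon
      have hb : ¬(PAvoids β [2,1,3] ∧ PAvoids β [2,3,1]) := fun hP => h ⟨β, hβ, hP⟩
      have hor : PContains β [2,1,3] ∨ PContains β [2,3,1] := by
        by_contra hc
        push_neg at hc
        exact hb ⟨hc.1, hc.2⟩
      rcases hor with h' | h'
      · exact (S7.tauR_avoids m).1 (S7.pcontains_trans hcon h')
      · exact (S7.tauR_avoids m).2 (S7.pcontains_trans hcon h')
  · rintro ⟨⟨β₁, hβ₁B, h₁a, h₁b, h₁c⟩, ⟨β₂, hβ₂B, h₂a, h₂b⟩,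
      ⟨β₃, hβ₃B, h₃a, h₃b, h₃c⟩, ⟨β₄, hβ₄B, h₄a, h₄b⟩⟩
    obtain ⟨k₁, hk₁⟩ := S7.struct_of_sigma_avoid (hB β₁ hβ₁B) h₁a h₁b h₁c
    obtain ⟨k₂, hk₂⟩ := S7.struct_of_tau_avoid (hB β₂ hβ₂B) h₂a h₂b
    obtain ⟨k₃, hk₃⟩ := S7.struct_of_revsigma_avoid (hB β₃ hβ₃B) h₃a h₃b h₃c
    obtain ⟨k₄, hk₄⟩ := S7.struct_of_revtau_avoid (hB β₄ hβ₄B) h₄a h₄b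
    set L := max (max β₁.length β₂.length) (max β₃.length β₄.length) with hLdef
    have hL1 : β₁.length ≤ L := le_trans (le_max_left _ _) (le_max_left _ _)
    have hL2 : β₂.length ≤ L := le_trans (le_max_right _ _) (le_max_left _ _)
    have hL3 : β₃.length ≤ L := le_trans (le_max_left _ _) (le_max_right _ _)
    have hL4 : β₄.length ≤ L := le_trans (le_max_right _ _) (le_max_right _ _)
    apply Set.Finite.subset (S7.finite_short (2*((L*L+1)*(L*L+1)+1)+1))
    rintro π ⟨⟨hπp, hπav⟩, hπva⟩
    refine ⟨hπp, ?_⟩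
    by_contra hlong
    push_neg at hlong
    obtain ⟨e₁, e₂, g, hsk⟩ := S7.skeleton_of_long hπp hπva L (by omega)
    cases e₁ <;> cases e₂
    · exact hπav β₁ hβ₁B (S7.contains_of_skeleton hsk hk₁ hL1)
    · exact hπav β₂ hβ₂B (S7.contains_of_skeleton hsk hk₂ hL2)
    · exact hπav β₄ hβ₄B (S7.contains_of_skeleton hsk hk₄ hL4)
    · exact hπav β₃ hβ₃B (S7.contains_of_skeleton hsk hk₃ hL3)
end
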